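/- arXiv:2201.08199 — 3 statements merged into one kernel-verified Lean document; each statement's English description precedes it below -/
import Mathlib

section
/- Let λ be a nonzero ordinal. The set No_{<λ} of surreal numbers of birthday less than λ contains 0 and is closed under addition and negation (i.e., it is an additive subgroup of the surreal numbers) if and only if λ = ω^α for some ordinal α. -/
universe u

namespace SetTheory

/-- Pre-games (removed from Mathlib; restored with the old definition). -/
inductive PGame : Type (u + 1)
  | mk : ∀ α β : Type u, (α → PGame) → (β → PGame) → PGame

namespace PGame

/-- The pair `(x ≤ y, y ≤ x)`, by simultaneous recursion. -/
noncomputable def lePair (x : PGame.{u}) : PGame.{u} → Prop × Prop :=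
  PGame.rec (motive := fun _ => PGame.{u} → Prop × Prop)
    (fun xl xr xL xR ihL ihR y =>
      PGame.rec (motive := fun _ => Prop × Prop)
        (fun yl yr yL yR jhL jhR =>
          (((∀ i, ¬ (ihL i (mk yl yr yL yR)).2) ∧ (∀ j, ¬ (jhR j).2)),
            ((∀ i, ¬ (jhL i).1) ∧ (∀ j, ¬ (ihR j (mk yl yr yL yR)).1)))) y) x

/-- `x ≤ y` iff no left option of `x` is `≥ y` and no right option of `y` is `≤ x`. -/
def le (x y : PGame.{u}) : Prop := (lePair x y).1

instance : LE PGame.{u} := ⟨le⟩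

instance : LT PGame.{u} := ⟨fun x y => x ≤ y ∧ ¬ y ≤ x⟩

instance : HasEquiv PGame.{u} := ⟨fun x y => x ≤ y ∧ y ≤ x⟩

/-- Numeric pre-games. -/
def Numeric : PGame.{u} → Prop
  | mk _ _ xL xR => (∀ i j, xL i < xR j) ∧ (∀ i, Numeric (xL i)) ∧ ∀ j, Numeric (xR j)

/-- The birthday of a pre-game. -/
noncomputable def birthday : PGame.{u} → Ordinal.{u}
  | mk _ _ xL xR =>
    max (⨆ i, Order.succ (birthday (xL i))) (⨆ j, Order.succ (birthday (xR j)))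

instance : Zero PGame.{u} := ⟨mk PEmpty PEmpty PEmpty.elim PEmpty.elim⟩

/-- Negation of pre-games. -/
def neg : PGame.{u} → PGame.{u}
  | mk xl xr xL xR => mk xr xl (fun j => neg (xR j)) (fun i => neg (xL i))

instance : Neg PGame.{u} := ⟨neg⟩

/-- Addition of pre-games. -/
noncomputable def add (x : PGame.{u}) : PGame.{u} → PGame.{u} :=
  PGame.rec (motive := fun _ => PGame.{u} → PGame.{u})
    (fun xl xr xL xR ihL ihR y =>
      PGame.rec (motive := fun _ => PGame.{u})
        (fun yl yr yL yR jhL jhR =>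
          mk (xl ⊕ yl) (xr ⊕ yr) (Sum.elim (fun i => ihL i (mk yl yr yL yR)) jhL)
            (Sum.elim (fun j => ihR j (mk yl yr yL yR)) jhR)) y) x

noncomputable instance : Add PGame.{u} := ⟨add⟩

theorem numeric_zero : Numeric (0 : PGame.{u}) :=
  ⟨fun i => PEmpty.elim i, fun i => PEmpty.elim i, fun j => PEmpty.elim j⟩

end PGame

end SetTheory

open SetTheory in
/-- Surreal numbers: numeric pre-games modulo equivalence. -/
def Surreal : Type (u + 1) :=
  Quot (fun a b : { x : PGame.{u} // x.Numeric } => a.1 ≈ b.1)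

namespace Surreal

open SetTheory in
/-- The surreal number represented by a numeric pre-game. -/
def mk (x : PGame.{u}) (h : x.Numeric) : Surreal.{u} := Quot.mk _ ⟨x, h⟩

open SetTheory in
instance : Zero Surreal.{u} := ⟨mk 0 PGame.numeric_zero⟩

open SetTheory in
open Classical in
/-- Negation, computed on a representative (the result is independent of it). -/
noncomputable instance : Neg Surreal.{u} :=
  ⟨fun x => if h : (-(Quot.out x).1 : PGame.{u}).Numeric then mk _ h else 0⟩

open SetTheory in
open Classical in
/-- Addition, computed on representatives (the result is independent of them). -/
noncomputable instance : Add Surreal.{u} :=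
  ⟨fun x y => if h : ((Quot.out x).1 + (Quot.out y).1 : PGame.{u}).Numeric then mk _ h else 0⟩

end Surreal

/-- The birthday of a surreal number: the least birthday among all numeric
pregames representing it. -/
noncomputable def Surreal.birthday (x : Surreal) : Ordinal :=
  sInf (SetTheory.PGame.birthday '' {p : SetTheory.PGame | ∃ h : p.Numeric, Surreal.mk p h = x})

/-- `No_{<λ}`: the set of surreal numbers of birthday less than `λ`. -/
noncomputable def NoLt (lam : Ordinal) : Set Surreal := {x | x.birthday < lam}


open SetTheory Ordinal

namespace SurrealBirthdayAux

/-- Natural (Hessenberg) addition of ordinals. -/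
noncomputable def nadd (a b : Ordinal.{u}) : Ordinal.{u} :=
  max (⨆ x : a.ToType, Order.succ (nadd (typein (α := a.ToType) (· < ·) x) b))
    (⨆ y : b.ToType, Order.succ (nadd a (typein (α := b.ToType) (· < ·) y)))
termination_by (a, b)
decreasing_by
  · exact Prod.Lex.left _ _ (typein_lt_self x)
  · exact Prod.Lex.right _ (typein_lt_self y)

infix:65 " ♯ " => nadd

theorem nadd_def (a b : Ordinal.{u}) : a ♯ b =
    max (⨆ x : a.ToType, Order.succ (nadd (typein (α := a.ToType) (· < ·) x) b))
      (⨆ y : b.ToType, Order.succ (nadd a (typein (α := b.ToType) (· < ·) y))) := by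
  rw [nadd]

theorem nadd_lt_nadd_right {a' a : Ordinal.{u}} (h : a' < a) (b : Ordinal.{u}) : a' ♯ b < a ♯ b := by
  rw [nadd_def a b]
  have h' : a' < type (α := a.ToType) (· < ·) := by rwa [type_toType]
  have := le_ciSup (f := fun x : a.ToType => Order.succ (nadd (typein (α := a.ToType) (· < ·) x) b))
    (Ordinal.bddAbove_range.{u, u} _) (enum (α := a.ToType) (· < ·) ⟨a', h'⟩)
  simp only [typein_enum] at this
  exact lt_of_lt_of_le (Order.lt_succ _) (this.trans (le_max_left _ _))

theorem nadd_lt_nadd_left {b' b : Ordinal.{u}} (h : b' < b) (a : Ordinal.{u}) : a ♯ b' < a ♯ b := by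
  rw [nadd_def a b]
  have h' : b' < type (α := b.ToType) (· < ·) := by rwa [type_toType]
  have := le_ciSup (f := fun y : b.ToType => Order.succ (nadd a (typein (α := b.ToType) (· < ·) y)))
    (Ordinal.bddAbove_range.{u, u} _) (enum (α := b.ToType) (· < ·) ⟨b', h'⟩)
  simp only [typein_enum] at this
  exact lt_of_lt_of_le (Order.lt_succ _) (this.trans (le_max_right _ _))

theorem nadd_le_iff {a b c : Ordinal.{u}} :
    a ♯ b ≤ c ↔ (∀ a' < a, a' ♯ b < c) ∧ ∀ b' < b, a ♯ b' < c := by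
  constructor
  · intro h
    exact ⟨fun a' ha' => (nadd_lt_nadd_right ha' b).trans_le h,
      fun b' hb' => (nadd_lt_nadd_left hb' a).trans_le h⟩
  · rintro ⟨h1, h2⟩
    rw [nadd_def]
    exact max_le (ciSup_le' fun x => Order.succ_le_of_lt (h1 _ (typein_lt_self x)))
      (ciSup_le' fun y => Order.succ_le_of_lt (h2 _ (typein_lt_self y)))

theorem nadd_le_nadd_right {a' a : Ordinal.{u}} (h : a' ≤ a) (b : Ordinal.{u}) : a' ♯ b ≤ a ♯ b := by
  rcases h.lt_or_eq with h | rfl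
  · exact (nadd_lt_nadd_right h b).le
  · exact le_rfl

theorem nadd_le_nadd_left {b' b : Ordinal.{u}} (h : b' ≤ b) (a : Ordinal.{u}) : a ♯ b' ≤ a ♯ b := by
  rcases h.lt_or_eq with h | rfl
  · exact (nadd_lt_nadd_left h a).le
  · exact le_rfl

theorem nadd_lt_nadd {a b c d : Ordinal.{u}} (h1 : a < b) (h2 : c < d) : a ♯ c < b ♯ d :=
  (nadd_lt_nadd_right h1 c).trans (nadd_lt_nadd_left h2 b)

theorem succ_nadd (a b : Ordinal.{u}) : Order.succ a ♯ b = Order.succ (a ♯ b) := by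
  induction b using Ordinal.induction with
  | _ b IH =>
  apply le_antisymm
  · rw [nadd_le_iff]
    refine ⟨fun a' ha' => ?_, fun b' hb' => ?_⟩
    · exact lt_of_le_of_lt (nadd_le_nadd_right (Order.lt_succ_iff.1 ha') b) (Order.lt_succ _)
    · rw [IH b' hb']
      exact Order.succ_lt_succ (nadd_lt_nadd_left hb' a)
  · exact Order.succ_le_of_lt (nadd_lt_nadd_right (Order.lt_succ a) b)

theorem nadd_succ (a b : Ordinal.{u}) : a ♯ Order.succ b = Order.succ (a ♯ b) := by
  induction a using Ordinal.induction with
  | _ a IH =>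
  apply le_antisymm
  · rw [nadd_le_iff]
    refine ⟨fun a' ha' => ?_, fun b' hb' => ?_⟩
    · rw [IH a' ha']
      exact Order.succ_lt_succ (nadd_lt_nadd_right ha' b)
    · exact lt_of_le_of_lt (nadd_le_nadd_left (Order.lt_succ_iff.1 hb') a) (Order.lt_succ _)
  · exact Order.succ_le_of_lt (nadd_lt_nadd_left (Order.lt_succ b) a)

@[simp]
theorem nadd_zero (a : Ordinal.{u}) : a ♯ 0 = a := by
  induction a using Ordinal.induction with
  | _ a IH =>
  apply le_antisymm
  · rw [nadd_le_iff]
    refine ⟨fun a' ha' => ?_, fun b' hb' => absurd hb' (not_lt_of_ge zero_le)⟩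
    rw [IH a' ha']
    exact ha'
  · refine le_of_forall_lt fun c hc => ?_
    rw [← IH c hc]
    exact nadd_lt_nadd_right hc 0

theorem nadd_nat (a : Ordinal.{u}) (n : ℕ) : a ♯ (n : Ordinal.{u}) = a + n := by
  induction n with
  | zero => simp
  | succ n ih =>
    rw [Nat.cast_succ, Ordinal.add_one_eq_succ, nadd_succ, ih, ← Ordinal.add_one_eq_succ,
      ← Ordinal.add_one_eq_succ, add_assoc]

/-- The key CNF-style bound: natural addition is controlled by division/remainder mod `e`,
provided `e` is closed under natural addition of smaller elements. -/
theorem nadd_div_mod_le {e : Ordinal} (he : 0 < e)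
    (hee : ∀ r s : Ordinal, r < e → s < e → r ♯ s < e) :
    ∀ a b : Ordinal, a ♯ b ≤ e * (a / e ♯ b / e) + (a % e ♯ b % e) := by
  intro a
  induction a using Ordinal.induction with
  | _ a IHa =>
  intro b
  induction b using Ordinal.induction with
  | _ b IHb =>
  rw [nadd_le_iff]
  constructor
  · intro a' ha'
    have hdiv : a' / e ≤ a / e := (Ordinal.div_le he.ne').2 (ha'.trans (lt_mul_succ_div a he.ne'))
    rcases lt_or_eq_of_le hdiv with hlt | heq
    · calc a' ♯ b ≤ e * (a' / e ♯ b / e) + (a' % e ♯ b % e) := IHa a' ha' b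
        _ < e * (a' / e ♯ b / e) + e :=
          add_lt_add_right (hee _ _ (mod_lt _ he.ne') (mod_lt _ he.ne')) _
        _ = e * (a' / e ♯ b / e + 1) := (mul_add_one e _).symm
        _ = e * (Order.succ (a' / e) ♯ b / e) := by
          rw [Ordinal.add_one_eq_succ, succ_nadd]
        _ ≤ e * (a / e ♯ b / e) :=
          mul_le_mul_right (nadd_le_nadd_right (Order.succ_le_of_lt hlt) _) e
        _ ≤ e * (a / e ♯ b / e) + (a % e ♯ b % e) := le_self_add
    · have hmod : a' % e < a % e := by
        have h1 := Ordinal.div_add_mod a' e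
        have h2 := Ordinal.div_add_mod a e
        rw [← h1, ← h2, heq] at ha'
        exact lt_of_add_lt_add_left ha'
      calc a' ♯ b ≤ e * (a' / e ♯ b / e) + (a' % e ♯ b % e) := IHa a' ha' b
        _ = e * (a / e ♯ b / e) + (a' % e ♯ b % e) := by rw [heq]
        _ < e * (a / e ♯ b / e) + (a % e ♯ b % e) :=
          add_lt_add_right (nadd_lt_nadd_right hmod _) _
  · intro b' hb'
    have hdiv : b' / e ≤ b / e := (Ordinal.div_le he.ne').2 (hb'.trans (lt_mul_succ_div b he.ne'))
    rcases lt_or_eq_of_le hdiv with hlt | heq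
    · calc a ♯ b' ≤ e * (a / e ♯ b' / e) + (a % e ♯ b' % e) := IHb b' hb'
        _ < e * (a / e ♯ b' / e) + e :=
          add_lt_add_right (hee _ _ (mod_lt _ he.ne') (mod_lt _ he.ne')) _
        _ = e * (a / e ♯ b' / e + 1) := (mul_add_one e _).symm
        _ = e * (a / e ♯ Order.succ (b' / e)) := by
          rw [Ordinal.add_one_eq_succ, nadd_succ]
        _ ≤ e * (a / e ♯ b / e) :=
          mul_le_mul_right (nadd_le_nadd_left (Order.succ_le_of_lt hlt) _) e
        _ ≤ e * (a / e ♯ b / e) + (a % e ♯ b % e) := le_self_add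
    · have hmod : b' % e < b % e := by
        have h1 := Ordinal.div_add_mod b' e
        have h2 := Ordinal.div_add_mod b e
        rw [← h1, ← h2, heq] at hb'
        exact lt_of_add_lt_add_left hb'
      calc a ♯ b' ≤ e * (a / e ♯ b' / e) + (a % e ♯ b' % e) := IHb b' hb'
        _ = e * (a / e ♯ b / e) + (a % e ♯ b' % e) := by rw [heq]
        _ < e * (a / e ♯ b / e) + (a % e ♯ b % e) :=
          add_lt_add_right (nadd_lt_nadd_left hmod _) _

/-- `ω ^ c` is closed under natural addition. -/
theorem nadd_lt_omega0_opow {c : Ordinal} : ∀ {a b : Ordinal},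
    a < ω ^ c → b < ω ^ c → a ♯ b < ω ^ c := by
  induction c using Ordinal.induction with
  | _ c IH =>
  intro a b ha hb
  rcases eq_or_ne c 0 with rfl | hc
  · rw [opow_zero, Ordinal.lt_one_iff_zero] at ha hb
    subst ha; subst hb
    simp
  · obtain ⟨γ₁, hγ₁, m, hm⟩ := (lt_omega0_opow hc).1 ha
    obtain ⟨γ₂, hγ₂, n, hn⟩ := (lt_omega0_opow hc).1 hb
    set γ := max γ₁ γ₂ with hγ
    have hγc : γ < c := max_lt hγ₁ hγ₂
    have e_pos : (0 : Ordinal) < ω ^ γ := opow_pos γ omega0_pos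
    have hee : ∀ r s : Ordinal, r < ω ^ γ → s < ω ^ γ → r ♯ s < ω ^ γ :=
      fun r s hr hs => IH γ hγc hr hs
    have ha' : a < ω ^ γ * m :=
      hm.trans_le (mul_le_mul_left
        (opow_le_opow_right omega0_pos (le_max_left _ _)) _)
    have hb' : b < ω ^ γ * n :=
      hn.trans_le (mul_le_mul_left
        (opow_le_opow_right omega0_pos (le_max_right _ _)) _)
    have hq : a / ω ^ γ < m := (Ordinal.div_lt e_pos.ne').2 ha'
    have hp : b / ω ^ γ < n := (Ordinal.div_lt e_pos.ne').2 hb'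
    have h2 : a / ω ^ γ ♯ b / ω ^ γ + 1 ≤ ((m + n : ℕ) : Ordinal) := by
      rw [Ordinal.add_one_eq_succ, Order.succ_le_iff]
      calc a / ω ^ γ ♯ b / ω ^ γ < (m : Ordinal) ♯ (n : ℕ) := nadd_lt_nadd hq hp
        _ = ((m + n : ℕ) : Ordinal) := by rw [nadd_nat]; push_cast; ring_nf
    calc a ♯ b ≤ ω ^ γ * (a / ω ^ γ ♯ b / ω ^ γ) + (a % ω ^ γ ♯ b % ω ^ γ) :=
          nadd_div_mod_le e_pos hee a b
      _ < ω ^ γ * (a / ω ^ γ ♯ b / ω ^ γ) + ω ^ γ :=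
          add_lt_add_right (hee _ _ (mod_lt _ e_pos.ne') (mod_lt _ e_pos.ne')) _
      _ = ω ^ γ * (a / ω ^ γ ♯ b / ω ^ γ + 1) := (mul_add_one _ _).symm
      _ ≤ ω ^ γ * ((m + n : ℕ) : Ordinal) := mul_le_mul_right h2 _
      _ < ω ^ c := omega0_opow_mul_nat_lt hγc _

end SurrealBirthdayAux

namespace SetTheory.PGame

/-- The type of left moves. -/
def LeftMoves : PGame.{u} → Type u
  | mk l _ _ _ => l

/-- The type of right moves. -/
def RightMoves : PGame.{u} → Type u
  | mk _ r _ _ => r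

/-- A left move. -/
def moveLeft : (x : PGame.{u}) → LeftMoves x → PGame.{u}
  | mk _ _ L _ => L

/-- A right move. -/
def moveRight : (x : PGame.{u}) → RightMoves x → PGame.{u}
  | mk _ _ _ R => R

theorem lePair_swap (x y : PGame.{u}) :
    ((lePair x y).2 ↔ (lePair y x).1) ∧ ((lePair y x).2 ↔ (lePair x y).1) := by
  induction x generalizing y with
  | mk xl xr xL xR ihL ihR =>
  induction y with
  | mk yl yr yL yR jhL jhR =>
  constructor
  · show ((∀ i, ¬ (lePair (mk xl xr xL xR) (yL i)).1) ∧
        (∀ j, ¬ (lePair (xR j) (mk yl yr yL yR)).1)) ↔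
      ((∀ i, ¬ (lePair (yL i) (mk xl xr xL xR)).2) ∧
        (∀ j, ¬ (lePair (mk yl yr yL yR) (xR j)).2))
    simp only [(jhL _).2, (ihR _ _).2]
  · show ((∀ i, ¬ (lePair (mk yl yr yL yR) (xL i)).1) ∧
        (∀ j, ¬ (lePair (yR j) (mk xl xr xL xR)).1)) ↔
      ((∀ i, ¬ (lePair (xL i) (mk yl yr yL yR)).2) ∧
        (∀ j, ¬ (lePair (mk xl xr xL xR) (yR j)).2))
    simp only [(ihL _ _).1, (jhR _).1]

theorem le_mk {xl xr : Type u} {xL : xl → PGame.{u}} {xR : xr → PGame.{u}}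
    {yl yr : Type u} {yL : yl → PGame.{u}} {yR : yr → PGame.{u}} :
    mk xl xr xL xR ≤ mk yl yr yL yR ↔
      (∀ i, ¬ mk yl yr yL yR ≤ xL i) ∧ ∀ j, ¬ yR j ≤ mk xl xr xL xR :=
  Iff.trans (Iff.rfl : _ ↔ ((∀ i, ¬ (lePair (xL i) (mk yl yr yL yR)).2) ∧
      ∀ j, ¬ (lePair (mk xl xr xL xR) (yR j)).2))
    (and_congr (forall_congr' fun _ => not_congr (lePair_swap _ _).1)
      (forall_congr' fun _ => not_congr (lePair_swap _ _).1))

theorem le_def {x y : PGame.{u}} :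
    x ≤ y ↔ (∀ i, ¬ y ≤ x.moveLeft i) ∧ ∀ j, ¬ y.moveRight j ≤ x := by
  cases x; cases y; exact le_mk

theorem lf_iff {x y : PGame.{u}} :
    ¬ y ≤ x ↔ (∃ i, x ≤ y.moveLeft i) ∨ ∃ j, x.moveRight j ≤ y := by
  rw [le_def]
  simp only [not_and_or, not_forall, not_not]

theorem lt_iff' {x y : PGame.{u}} : x < y ↔ x ≤ y ∧ ¬ y ≤ x := Iff.rfl

theorem equiv_iff {x y : PGame.{u}} : x ≈ y ↔ x ≤ y ∧ y ≤ x := Iff.rfl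

theorem le_refl' (x : PGame.{u}) : x ≤ x := by
  induction x with
  | mk xl xr xL xR ihL ihR =>
    exact le_def.2 ⟨fun i h => (le_def.1 h).1 i (ihL i), fun j h => (le_def.1 h).2 j (ihR j)⟩

theorem not_le_moveLeft (x : PGame.{u}) (i) : ¬ x ≤ x.moveLeft i :=
  fun h => (le_def.1 h).1 i (le_refl' _)

theorem not_moveRight_le (x : PGame.{u}) (j) : ¬ x.moveRight j ≤ x :=
  fun h => (le_def.1 h).2 j (le_refl' _)

theorem le_trans_aux {x y z : PGame.{u}}
    (h₁ : ∀ {i}, y ≤ z → z ≤ x.moveLeft i → y ≤ x.moveLeft i)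
    (h₂ : ∀ {j}, z.moveRight j ≤ x → x ≤ y → z.moveRight j ≤ y) (hxy : x ≤ y) (hyz : y ≤ z) :
    x ≤ z :=
  le_def.2 ⟨fun i h => (le_def.1 hxy).1 i (h₁ hyz h), fun j h => (le_def.1 hyz).2 j (h₂ h hxy)⟩

theorem le_trans_triple (x y z : PGame.{u}) :
    (x ≤ y → y ≤ z → x ≤ z) ∧ (y ≤ z → z ≤ x → y ≤ x) ∧ (z ≤ x → x ≤ y → z ≤ y) := by
  induction x generalizing y z with
  | mk xl xr xL xR IHxl IHxr =>
  induction y generalizing z with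
  | mk yl yr yL yR IHyl IHyr =>
  induction z with
  | mk zl zr zL zR IHzl IHzr =>
  exact ⟨le_trans_aux (fun {i} => (IHxl i _ _).2.1) fun {j} => (IHzr j).2.2,
    le_trans_aux (fun {i} => (IHyl i _).2.2) fun {j} => (IHxr j _ _).1,
    le_trans_aux (fun {i} => (IHzl i).1) fun {j} => (IHyr j _).2.1⟩

theorem le_trans' {x y z : PGame.{u}} (h1 : x ≤ y) (h2 : y ≤ z) : x ≤ z :=
  (le_trans_triple x y z).1 h1 h2

theorem lt_of_le_of_lt' {x y z : PGame.{u}} (h1 : x ≤ y) (h2 : y < z) : x < z :=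
  lt_iff'.2 ⟨le_trans' h1 (lt_iff'.1 h2).1, fun h => (lt_iff'.1 h2).2 (le_trans' h h1)⟩

theorem lt_of_lt_of_le' {x y z : PGame.{u}} (h1 : x < y) (h2 : y ≤ z) : x < z :=
  lt_iff'.2 ⟨le_trans' (lt_iff'.1 h1).1 h2, fun h => (lt_iff'.1 h1).2 (le_trans' h2 h)⟩

theorem birthday_mk' {xl xr : Type u} (xL : xl → PGame.{u}) (xR : xr → PGame.{u}) :
    birthday (mk xl xr xL xR) =
      max (⨆ i, Order.succ (birthday (xL i))) (⨆ j, Order.succ (birthday (xR j))) := by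
  rw [birthday]

theorem birthday_moveLeft_lt (x : PGame.{u}) (i) : birthday (x.moveLeft i) < birthday x := by
  cases x with
  | mk xl xr xL xR =>
  rw [birthday_mk']
  exact lt_of_lt_of_le (Order.lt_succ _)
    (le_trans (le_ciSup (f := fun i => Order.succ (birthday (xL i)))
      (Ordinal.bddAbove_range.{u, u} _) i) (le_max_left _ _))

theorem birthday_moveRight_lt (x : PGame.{u}) (j) : birthday (x.moveRight j) < birthday x := by
  cases x with
  | mk xl xr xL xR =>
  rw [birthday_mk']
  exact lt_of_lt_of_le (Order.lt_succ _)
    (le_trans (le_ciSup (f := fun j => Order.succ (birthday (xR j)))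
      (Ordinal.bddAbove_range.{u, u} _) j) (le_max_right _ _))

@[simp]
theorem birthday_zero : birthday (0 : PGame.{u}) = 0 := by
  show birthday (mk PEmpty PEmpty PEmpty.elim PEmpty.elim) = 0
  rw [birthday_mk']
  exact le_antisymm (max_le (ciSup_le' fun i => i.elim) (ciSup_le' fun j => j.elim))
    zero_le

theorem add_mk' {xl xr yl yr : Type u} (xL : xl → PGame.{u}) (xR : xr → PGame.{u})
    (yL : yl → PGame.{u}) (yR : yr → PGame.{u}) :
    mk xl xr xL xR + mk yl yr yL yR =
      mk (xl ⊕ yl) (xr ⊕ yr) (Sum.elim (fun i => xL i + mk yl yr yL yR) (fun j => mk xl xr xL xR + yL j))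
        (Sum.elim (fun i => xR i + mk yl yr yL yR) (fun j => mk xl xr xL xR + yR j)) := rfl

theorem forall_leftMoves_add {x z : PGame.{u}} {P : PGame.{u} → Prop} :
    (∀ i, P ((x + z).moveLeft i)) ↔ (∀ i, P (x.moveLeft i + z)) ∧ ∀ k, P (x + z.moveLeft k) := by
  cases x; cases z
  constructor
  · intro h
    exact ⟨fun i => h (Sum.inl i), fun k => h (Sum.inr k)⟩
  · rintro ⟨h1, h2⟩ s
    match s with
    | .inl i => exact h1 i
    | .inr k => exact h2 k

theorem forall_rightMoves_add {x z : PGame.{u}} {P : PGame.{u} → Prop} :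
    (∀ j, P ((x + z).moveRight j)) ↔ (∀ j, P (x.moveRight j + z)) ∧ ∀ k, P (x + z.moveRight k) := by
  cases x; cases z
  constructor
  · intro h
    exact ⟨fun i => h (Sum.inl i), fun k => h (Sum.inr k)⟩
  · rintro ⟨h1, h2⟩ s
    match s with
    | .inl i => exact h1 i
    | .inr k => exact h2 k

theorem add_lf_A1 {x z w : PGame.{u}} (H : x + z ≤ w) (i) : ¬ w ≤ x.moveLeft i + z :=
  ((forall_leftMoves_add (P := fun t => ¬ w ≤ t)).1 (le_def.1 H).1).1 i

theorem add_lf_A2 {x z w : PGame.{u}} (H : x + z ≤ w) (k) : ¬ w ≤ x + z.moveLeft k :=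
  ((forall_leftMoves_add (P := fun t => ¬ w ≤ t)).1 (le_def.1 H).1).2 k

theorem add_lf_B1 {x z w : PGame.{u}} (H : w ≤ x + z) (j) : ¬ x.moveRight j + z ≤ w :=
  ((forall_rightMoves_add (P := fun t => ¬ t ≤ w)).1 (le_def.1 H).2).1 j

theorem add_lf_B2 {x z w : PGame.{u}} (H : w ≤ x + z) (k) : ¬ x + z.moveRight k ≤ w :=
  ((forall_rightMoves_add (P := fun t => ¬ t ≤ w)).1 (le_def.1 H).2).2 k

theorem add_le_add_right' (x y z : PGame.{u}) (h : x ≤ y) : x + z ≤ y + z := by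
  refine le_def.2 ⟨(forall_leftMoves_add (P := fun t => ¬ y + z ≤ t)).2 ⟨fun i hi => ?_, fun k hk => ?_⟩,
    (forall_rightMoves_add (P := fun t => ¬ t ≤ x + z)).2 ⟨fun j hj => ?_, fun l hl => ?_⟩⟩
  · rcases lf_iff.1 ((le_def.1 h).1 i) with ⟨i', h'⟩ | ⟨j, h'⟩
    · exact add_lf_A1 hi i' (add_le_add_right' _ _ z h')
    · exact add_lf_B1 hi j (add_le_add_right' _ _ z h')
  · exact add_lf_A2 hk k (add_le_add_right' x y _ h)
  · rcases lf_iff.1 ((le_def.1 h).2 j) with ⟨i, h'⟩ | ⟨j', h'⟩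
    · exact add_lf_A1 hj i (add_le_add_right' _ _ z h')
    · exact add_lf_B1 hj j' (add_le_add_right' _ _ z h')
  · exact add_lf_B2 hl l (add_le_add_right' x y _ h)
termination_by (birthday x, birthday y, birthday z)
decreasing_by
  · exact Prod.Lex.left _ _ (birthday_moveLeft_lt _ _)
  · exact Prod.Lex.left _ _ ((birthday_moveRight_lt _ _).trans (birthday_moveLeft_lt _ _))
  · exact Prod.Lex.right _ (Prod.Lex.right _ (birthday_moveLeft_lt _ _))
  · exact Prod.Lex.right _ (Prod.Lex.left _ _ ((birthday_moveLeft_lt _ _).trans (birthday_moveRight_lt _ _)))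
  · exact Prod.Lex.left _ _ (birthday_moveRight_lt _ _)
  · exact Prod.Lex.right _ (Prod.Lex.right _ (birthday_moveRight_lt _ _))

theorem add_le_add_left' (x y z : PGame.{u}) (h : y ≤ z) : x + y ≤ x + z := by
  refine le_def.2 ⟨(forall_leftMoves_add (P := fun t => ¬ x + z ≤ t)).2 ⟨fun i hi => ?_, fun k hk => ?_⟩,
    (forall_rightMoves_add (P := fun t => ¬ t ≤ x + y)).2 ⟨fun j hj => ?_, fun l hl => ?_⟩⟩
  · exact add_lf_A1 hi i (add_le_add_left' _ y z h)
  · rcases lf_iff.1 ((le_def.1 h).1 k) with ⟨i', h'⟩ | ⟨j, h'⟩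
    · exact add_lf_A2 hk i' (add_le_add_left' x _ _ h')
    · exact add_lf_B2 hk j (add_le_add_left' x _ _ h')
  · exact add_lf_B1 hj j (add_le_add_left' _ y z h)
  · rcases lf_iff.1 ((le_def.1 h).2 l) with ⟨i, h'⟩ | ⟨j, h'⟩
    · exact add_lf_A2 hl i (add_le_add_left' x _ _ h')
    · exact add_lf_B2 hl j (add_le_add_left' x _ _ h')
termination_by (birthday x, birthday y, birthday z)
decreasing_by
  · exact Prod.Lex.left _ _ (birthday_moveLeft_lt _ _)
  · exact Prod.Lex.right _ (Prod.Lex.left _ _ (birthday_moveLeft_lt _ _))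
  · exact Prod.Lex.right _ (Prod.Lex.left _ _ ((birthday_moveRight_lt _ _).trans (birthday_moveLeft_lt _ _)))
  · exact Prod.Lex.left _ _ (birthday_moveRight_lt _ _)
  · exact Prod.Lex.right _ (Prod.Lex.right _ ((birthday_moveLeft_lt _ _).trans (birthday_moveRight_lt _ _)))
  · exact Prod.Lex.right _ (Prod.Lex.left _ _ (birthday_moveRight_lt _ _))

theorem add_congr' {x x' y y' : PGame.{u}} (hx : x ≈ x') (hy : y ≈ y') : x + y ≈ x' + y' :=
  equiv_iff.2 ⟨le_trans' (add_le_add_right' _ _ _ (equiv_iff.1 hx).1) (add_le_add_left' _ _ _ (equiv_iff.1 hy).1),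
    le_trans' (add_le_add_right' _ _ _ (equiv_iff.1 hx).2) (add_le_add_left' _ _ _ (equiv_iff.1 hy).2)⟩

theorem lt_add_right {x y : PGame.{u}} (h : x < y) (z : PGame.{u}) : x + z < y + z := by
  refine lt_iff'.2 ⟨add_le_add_right' _ _ _ (lt_iff'.1 h).1, fun H => ?_⟩
  rcases lf_iff.1 (lt_iff'.1 h).2 with ⟨i, hi⟩ | ⟨j, hj⟩
  · exact add_lf_A1 H i (add_le_add_right' _ _ z hi)
  · exact add_lf_B1 H j (add_le_add_right' _ _ z hj)

theorem lt_add_left {y z : PGame.{u}} (h : y < z) (x : PGame.{u}) : x + y < x + z := by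
  refine lt_iff'.2 ⟨add_le_add_left' _ _ _ (lt_iff'.1 h).1, fun H => ?_⟩
  rcases lf_iff.1 (lt_iff'.1 h).2 with ⟨i, hi⟩ | ⟨j, hj⟩
  · exact add_lf_A2 H i (add_le_add_left' x _ _ hi)
  · exact add_lf_B2 H j (add_le_add_left' x _ _ hj)

theorem numeric_def {x : PGame.{u}} : Numeric x ↔ (∀ i j, x.moveLeft i < x.moveRight j) ∧
    (∀ i, Numeric (x.moveLeft i)) ∧ ∀ j, Numeric (x.moveRight j) := by
  cases x
  rw [Numeric]
  rfl

theorem numeric_le_aux (x : PGame.{u}) (hx : Numeric x) :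
    (∀ i, x.moveLeft i ≤ x) ∧ ∀ j, x ≤ x.moveRight j := by
  induction x with
  | mk xl xr xL xR ihL ihR =>
  obtain ⟨h1, h2, h3⟩ := numeric_def.1 hx
  refine ⟨fun i => le_def.2 ⟨fun i' h => ?_, fun j h => ?_⟩,
    fun j => le_def.2 ⟨fun i h => ?_, fun j' h => ?_⟩⟩
  · exact not_le_moveLeft (mk xl xr xL xR) i (le_trans' h ((ihL i (h2 i)).1 i'))
  · exact (lt_iff'.1 (h1 i j)).2 h
  · exact (lt_iff'.1 (h1 i j)).2 h
  · exact not_moveRight_le (mk xl xr xL xR) j (le_trans' ((ihR j (h3 j)).2 j') h)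

theorem numeric_moveLeft_lt {x : PGame.{u}} (hx : Numeric x) (i) : x.moveLeft i < x :=
  lt_iff'.2 ⟨(numeric_le_aux x hx).1 i, not_le_moveLeft x i⟩

theorem numeric_lt_moveRight {x : PGame.{u}} (hx : Numeric x) (j) : x < x.moveRight j :=
  lt_iff'.2 ⟨(numeric_le_aux x hx).2 j, not_moveRight_le x j⟩

theorem numeric_add : ∀ (x y : PGame.{u}), Numeric x → Numeric y → Numeric (x + y) := by
  intro x
  induction x with
  | mk xl xr xL xR ihL ihR =>
  intro y
  induction y with
  | mk yl yr yL yR jhL jhR =>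
  intro hx hy
  obtain ⟨hx1, hx2, hx3⟩ := numeric_def.1 hx
  obtain ⟨hy1, hy2, hy3⟩ := numeric_def.1 hy
  rw [add_mk']
  refine numeric_def.2 ⟨?_, ?_, ?_⟩
  · rintro (i | k) (j | l)
    · exact lt_add_right (hx1 i j) _
    · exact lt_of_le_of_lt' (add_le_add_left' _ _ _ (lt_iff'.1 (numeric_lt_moveRight hy l)).1)
        (lt_add_right (numeric_moveLeft_lt hx i) _)
    · exact lt_of_lt_of_le' (lt_add_left (numeric_moveLeft_lt hy k) _)
        (add_le_add_right' _ _ _ (lt_iff'.1 (numeric_lt_moveRight hx j)).1)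
    · exact lt_add_left (hy1 k l) _
  · rintro (i | k)
    · exact ihL i _ (hx2 i) hy
    · exact jhL k hx (hy2 k)
  · rintro (j | l)
    · exact ihR j _ (hx3 j) hy
    · exact jhR l hx (hy3 l)

theorem Numeric.add {x y : PGame.{u}} (hx : Numeric x) (hy : Numeric y) : Numeric (x + y) :=
  numeric_add x y hx hy

theorem neg_mk' {xl xr : Type u} (xL : xl → PGame.{u}) (xR : xr → PGame.{u}) :
    -(mk xl xr xL xR) = mk xr xl (fun j => -(xR j)) (fun i => -(xL i)) := rfl

theorem neg_le_neg_aux (x y : PGame.{u}) :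
    (-y ≤ -x ↔ x ≤ y) ∧ (-x ≤ -y ↔ y ≤ x) := by
  induction x generalizing y with
  | mk xl xr xL xR ihL ihR =>
  induction y with
  | mk yl yr yL yR jhL jhR =>
  constructor
  · rw [neg_mk', neg_mk', le_mk, le_mk]
    exact and_comm.trans (and_congr (forall_congr' fun i => not_congr (ihL i (mk yl yr yL yR)).2)
      (forall_congr' fun j => not_congr (jhR j).2))
  · rw [neg_mk', neg_mk', le_mk, le_mk]
    exact and_comm.trans (and_congr (forall_congr' fun j => not_congr (jhL j).1)
      (forall_congr' fun i => not_congr (ihR i (mk yl yr yL yR)).1))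

theorem neg_le_neg_iff' {x y : PGame.{u}} : -y ≤ -x ↔ x ≤ y := (neg_le_neg_aux x y).1

theorem Numeric.neg {x : PGame.{u}} (hx : Numeric x) : Numeric (-x) := by
  induction x with
  | mk xl xr xL xR ihL ihR =>
  obtain ⟨h1, h2, h3⟩ := numeric_def.1 hx
  rw [neg_mk']
  exact numeric_def.2 ⟨fun j i => lt_iff'.2 ⟨neg_le_neg_iff'.2 (lt_iff'.1 (h1 i j)).1,
    fun h => (lt_iff'.1 (h1 i j)).2 (neg_le_neg_iff'.1 h)⟩,
    fun j => ihR j (h3 j), fun i => ihL i (h2 i)⟩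

theorem neg_congr' {x y : PGame.{u}} (h : x ≈ y) : -x ≈ -y :=
  equiv_iff.2 ⟨neg_le_neg_iff'.2 (equiv_iff.1 h).2, neg_le_neg_iff'.2 (equiv_iff.1 h).1⟩

theorem neg_neg' (x : PGame.{u}) : -(-x) = x := by
  induction x with
  | mk xl xr xL xR ihL ihR =>
  simp only [neg_mk', ihL, ihR]

theorem birthday_neg (x : PGame.{u}) : birthday (-x) = birthday x := by
  induction x with
  | mk xl xr xL xR ihL ihR =>
  rw [neg_mk', birthday_mk', birthday_mk']
  simp only [ihL, ihR]
  exact max_comm _ _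

theorem birthday_add_le_nadd (x y : PGame.{u}) :
    birthday (x + y) ≤ birthday x ♯ birthday y := by
  induction x generalizing y with
  | mk xl xr xL xR ihL ihR =>
  induction y with
  | mk yl yr yL yR jhL jhR =>
  rw [add_mk', birthday_mk']
  refine max_le (ciSup_le' fun s => ?_) (ciSup_le' fun s => ?_)
  · rcases s with i | k
    · exact Order.succ_le_of_lt ((ihL i _).trans_lt
        (SurrealBirthdayAux.nadd_lt_nadd_right (birthday_moveLeft_lt (mk xl xr xL xR) i) _))
    · exact Order.succ_le_of_lt ((jhL k).trans_lt
        (SurrealBirthdayAux.nadd_lt_nadd_left (birthday_moveLeft_lt (mk yl yr yL yR) k) _))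
  · rcases s with i | k
    · exact Order.succ_le_of_lt ((ihR i _).trans_lt
        (SurrealBirthdayAux.nadd_lt_nadd_right (birthday_moveRight_lt (mk xl xr xL xR) i) _))
    · exact Order.succ_le_of_lt ((jhR k).trans_lt
        (SurrealBirthdayAux.nadd_lt_nadd_left (birthday_moveRight_lt (mk yl yr yL yR) k) _))

theorem le_add_of_isEmpty (z : PGame.{u}) [IsEmpty (RightMoves z)] (x : PGame.{u}) : x ≤ x + z := by
  induction x with
  | mk xl xr xL xR ihL ihR =>
  refine le_def.2 ⟨fun i h => add_lf_A1 h i (ihL i),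
    (forall_rightMoves_add (P := fun t => ¬ t ≤ mk xl xr xL xR)).2
      ⟨fun j hj => not_moveRight_le (mk xl xr xL xR) j (le_trans' (ihR j) hj), fun k => isEmptyElim k⟩⟩

end SetTheory.PGame

/-- Ordinals as pregames. -/
noncomputable def Ordinal.toPGame (o : Ordinal.{u}) : SetTheory.PGame.{u} :=
  SetTheory.PGame.mk o.ToType PEmpty
    (fun x => Ordinal.toPGame (Ordinal.typein (α := o.ToType) (· < ·) x)) PEmpty.elim
termination_by o
decreasing_by exact Ordinal.typein_lt_self x


namespace SurrealBirthdayAux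

open PGame

theorem toPGame_def (o : Ordinal.{u}) : o.toPGame = PGame.mk o.ToType PEmpty
    (fun x => (Ordinal.typein (α := o.ToType) (· < ·) x).toPGame) PEmpty.elim := by
  rw [Ordinal.toPGame]

theorem numeric_toPGame (o : Ordinal.{u}) : o.toPGame.Numeric := by
  induction o using Ordinal.induction with
  | _ o IH =>
  rw [toPGame_def]
  exact numeric_def.2 ⟨fun _ j => j.elim, fun x => IH _ (typein_lt_self x), fun j => j.elim⟩

instance isEmpty_rightMoves_toPGame (o : Ordinal.{u}) : IsEmpty (RightMoves o.toPGame) := by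
  rw [toPGame_def]
  exact inferInstanceAs (IsEmpty PEmpty)

theorem toPGame_le_birthday (o : Ordinal.{u}) :
    ∀ {p : PGame.{u}}, o.toPGame ≤ p → o ≤ p.birthday := by
  induction o using Ordinal.induction with
  | _ o IH =>
  intro p h
  refine le_of_forall_lt fun c hc => ?_
  have hc' : c < type (α := o.ToType) (· < ·) := by rwa [type_toType]
  have hx : typein (α := o.ToType) (· < ·) (enum (α := o.ToType) (· < ·) ⟨c, hc'⟩) = c :=
    typein_enum _ _
  rw [toPGame_def] at h
  have h1 : ¬ p ≤ (typein (α := o.ToType) (· < ·) (enum (α := o.ToType) (· < ·) ⟨c, hc'⟩)).toPGame :=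
    (le_def.1 h).1 _
  rw [hx] at h1
  rcases lf_iff.1 h1 with ⟨i, hi⟩ | ⟨j, _⟩
  · exact (IH c hc hi).trans_lt (birthday_moveLeft_lt p i)
  · exact isEmptyElim j

theorem birthday_toPGame_le (o : Ordinal.{u}) : o.toPGame.birthday ≤ o := by
  induction o using Ordinal.induction with
  | _ o IH =>
  rw [toPGame_def, birthday_mk']
  exact max_le (ciSup_le' fun x =>
      Order.succ_le_of_lt ((IH _ (typein_lt_self x)).trans_lt (typein_lt_self x)))
    (ciSup_le' fun j => j.elim)

theorem birthday_ordinalToPGame (o : Ordinal.{u}) : o.toPGame.birthday = o :=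
  le_antisymm (birthday_toPGame_le o) (toPGame_le_birthday o (le_refl' _))

theorem exists_moveLeft_toPGame {c a : Ordinal.{u}} (h : c < a) :
    ∃ i : LeftMoves a.toPGame, a.toPGame.moveLeft i = c.toPGame := by
  have h' : c < type (α := a.ToType) (· < ·) := by rwa [type_toType]
  rw [toPGame_def a]
  exact ⟨enum (α := a.ToType) (· < ·) ⟨c, h'⟩, by
    show (typein (α := a.ToType) (· < ·) (enum (α := a.ToType) (· < ·) ⟨c, h'⟩)).toPGame = _
    rw [typein_enum]⟩

theorem toPGame_add_le (a b : Ordinal.{u}) : (a + b).toPGame ≤ a.toPGame + b.toPGame := by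
  induction b using Ordinal.induction with
  | _ b IH =>
  rw [toPGame_def (a + b)]
  refine le_def.2 ⟨fun x H => ?_, (forall_rightMoves_add (x := a.toPGame) (z := b.toPGame)
    (P := fun t => ¬ t ≤ _)).2 ⟨fun j => isEmptyElim j, fun k => isEmptyElim k⟩⟩
  have H' : a.toPGame + b.toPGame ≤ (typein (α := (a + b).ToType) (· < ·) x).toPGame := H
  have hc := typein_lt_self x
  generalize typein (α := (a + b).ToType) (· < ·) x = c at H' hc
  rcases lt_or_ge c a with hca | hac
  · obtain ⟨i, hi⟩ := exists_moveLeft_toPGame hca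
    have := add_lf_A1 H' i
    rw [hi] at this
    exact this (le_add_of_isEmpty _ _)
  · have hd : c - a < b := by
      have : a + (c - a) < a + b := by rwa [Ordinal.add_sub_cancel_of_le hac]
      exact (add_lt_add_iff_left a).1 this
    obtain ⟨k, hk⟩ := exists_moveLeft_toPGame hd
    have := add_lf_A2 H' k
    rw [hk] at this
    have h2 := IH _ hd
    rw [Ordinal.add_sub_cancel_of_le hac] at h2
    exact this h2

end SurrealBirthdayAux

theorem Surreal.mk_eq_mk {p q : SetTheory.PGame.{u}} {hp : p.Numeric} {hq : q.Numeric} :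
    Surreal.mk p hp = Surreal.mk q hq ↔ p ≈ q := by
  constructor
  · intro h
    have e : Equivalence (fun a b : { x : SetTheory.PGame.{u} // x.Numeric } => a.1 ≈ b.1) :=
      ⟨fun _ => PGame.equiv_iff.2 ⟨PGame.le_refl' _, PGame.le_refl' _⟩,
        fun h => PGame.equiv_iff.2 ⟨(PGame.equiv_iff.1 h).2, (PGame.equiv_iff.1 h).1⟩,
        fun h1 h2 => PGame.equiv_iff.2 ⟨PGame.le_trans' (PGame.equiv_iff.1 h1).1 (PGame.equiv_iff.1 h2).1,
          PGame.le_trans' (PGame.equiv_iff.1 h2).2 (PGame.equiv_iff.1 h1).2⟩⟩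
    exact e.eqvGen_iff.1 (Quot.eqvGen_exact h)
  · intro h
    exact Quot.sound h

/-- Ordinals as surreal numbers. -/
noncomputable def Ordinal.toSurreal (o : Ordinal.{u}) : Surreal.{u} :=
  Surreal.mk o.toPGame (SurrealBirthdayAux.numeric_toPGame o)

namespace SurrealBirthdayAux

open PGame Surreal

theorem out_equiv {p : PGame.{u}} (hp : p.Numeric) : (Quot.out (Surreal.mk p hp)).1 ≈ p := by
  have := Quot.out_eq (Surreal.mk p hp)
  exact Surreal.mk_eq_mk.1 this

theorem birthday_le {x : Surreal} {p : PGame} (h : p.Numeric) (hx : Surreal.mk p h = x) :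
    x.birthday ≤ p.birthday :=
  csInf_le' ⟨p, ⟨h, hx⟩, rfl⟩

theorem exists_rep (x : Surreal) :
    ∃ (p : PGame) (h : p.Numeric), Surreal.mk p h = x ∧ p.birthday = x.birthday := by
  have hne : (PGame.birthday '' {p : PGame | ∃ h : p.Numeric, Surreal.mk p h = x}).Nonempty := by
    obtain ⟨⟨p, h⟩, rfl⟩ := Quot.exists_rep x
    exact ⟨p.birthday, ⟨p, ⟨h, rfl⟩, rfl⟩⟩
  obtain ⟨p, ⟨h, hx⟩, hb⟩ := csInf_mem hne
  exact ⟨p, h, hx, hb⟩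

open Classical in
theorem mk_add {p q : PGame} (hp : p.Numeric) (hq : q.Numeric) :
    Surreal.mk p hp + Surreal.mk q hq = Surreal.mk (p + q) (hp.add hq) := by
  show (if h : ((Quot.out (Surreal.mk p hp)).1 + (Quot.out (Surreal.mk q hq)).1 : PGame).Numeric
    then Surreal.mk _ h else 0) = _
  rw [dif_pos ((Quot.out (Surreal.mk p hp)).2.add (Quot.out (Surreal.mk q hq)).2)]
  exact Surreal.mk_eq_mk.2 (add_congr' (out_equiv hp) (out_equiv hq))

open Classical in
theorem mk_neg {p : PGame} (hp : p.Numeric) :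
    -Surreal.mk p hp = Surreal.mk (-p) hp.neg := by
  show (if h : (-(Quot.out (Surreal.mk p hp)).1 : PGame).Numeric then Surreal.mk _ h else 0) = _
  rw [dif_pos (Quot.out (Surreal.mk p hp)).2.neg]
  exact Surreal.mk_eq_mk.2 (neg_congr' (out_equiv hp))

theorem surreal_neg_neg (x : Surreal.{u}) : -(-x) = x := by
  obtain ⟨⟨p, h⟩, rfl⟩ := Quot.exists_rep x
  show -(-Surreal.mk p h) = Surreal.mk p h
  rw [mk_neg, mk_neg]
  exact Surreal.mk_eq_mk.2 (by rw [neg_neg']; exact equiv_iff.2 ⟨le_refl' _, le_refl' _⟩)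

theorem birthday_toSurreal (o : Ordinal) : (Ordinal.toSurreal o).birthday = o := by
  apply le_antisymm
  · calc (Ordinal.toSurreal o).birthday ≤ o.toPGame.birthday :=
        birthday_le (numeric_toPGame o) rfl
      _ = o := birthday_ordinalToPGame o
  · refine le_csInf ⟨o.toPGame.birthday, ⟨o.toPGame, ⟨numeric_toPGame o, rfl⟩, rfl⟩⟩ ?_
    rintro b ⟨p, ⟨h, hx⟩, rfl⟩
    have hequiv : p ≈ o.toPGame := Surreal.mk_eq_mk.1 hx
    exact toPGame_le_birthday o (equiv_iff.1 hequiv).2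

theorem birthday_zero' : (0 : Surreal).birthday = 0 := by
  apply le_antisymm
  · have := birthday_le numeric_zero (rfl : Surreal.mk 0 numeric_zero = 0)
    exact this.trans (le_of_eq PGame.birthday_zero)
  · exact zero_le

theorem birthday_neg_le (x : Surreal) : (-x).birthday ≤ x.birthday := by
  obtain ⟨p, h, rfl, hb⟩ := exists_rep x
  calc (-Surreal.mk p h).birthday = (Surreal.mk (-p) h.neg).birthday := by rw [mk_neg]
    _ ≤ (-p).birthday := birthday_le _ rfl
    _ = p.birthday := PGame.birthday_neg p
    _ = (Surreal.mk p h).birthday := hb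

theorem birthday_neg' (x : Surreal) : (-x).birthday = x.birthday :=
  le_antisymm (birthday_neg_le x) (by have := birthday_neg_le (-x); rwa [surreal_neg_neg] at this)

theorem birthday_add_le (x y : Surreal) :
    (x + y).birthday ≤ x.birthday ♯ y.birthday := by
  obtain ⟨p, hp, rfl, hbp⟩ := exists_rep x
  obtain ⟨q, hq, rfl, hbq⟩ := exists_rep y
  calc (Surreal.mk p hp + Surreal.mk q hq).birthday
      = (Surreal.mk (p + q) (hp.add hq)).birthday := by rw [mk_add]
    _ ≤ (p + q).birthday := birthday_le _ rfl
    _ ≤ p.birthday ♯ q.birthday := PGame.birthday_add_le_nadd p q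
    _ = (Surreal.mk p hp).birthday ♯ (Surreal.mk q hq).birthday := by rw [hbp, hbq]

theorem add_le_birthday_toSurreal_add (a b : Ordinal.{u}) :
    a + b ≤ (Ordinal.toSurreal a + Ordinal.toSurreal b).birthday := by
  show a + b ≤ (Surreal.mk a.toPGame (numeric_toPGame a) +
    Surreal.mk b.toPGame (numeric_toPGame b)).birthday
  rw [mk_add]
  refine le_csInf ⟨_, ⟨_, ⟨(numeric_toPGame a).add (numeric_toPGame b), rfl⟩, rfl⟩⟩ ?_
  rintro c ⟨p, ⟨h, hx⟩, rfl⟩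
  have hequiv : p ≈ a.toPGame + b.toPGame := Surreal.mk_eq_mk.1 hx
  exact toPGame_le_birthday (a + b) (le_trans' (toPGame_add_le a b) (equiv_iff.1 hequiv).2)

end SurrealBirthdayAux

open SurrealBirthdayAux in
/-- For a nonzero ordinal `λ`, `No_{<λ}` is an additive subgroup of the surreals
(contains 0, closed under addition and negation) iff `λ = ω ^ α` for some ordinal `α`. -/
theorem noLt_isAddSubgroup_iff (lam : Ordinal) (hlam : lam ≠ 0) :
    ((0 : Surreal) ∈ NoLt lam ∧
        (∀ x ∈ NoLt lam, ∀ y ∈ NoLt lam, x + y ∈ NoLt lam) ∧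
        (∀ x ∈ NoLt lam, -x ∈ NoLt lam)) ↔
      ∃ a : Ordinal, lam = Ordinal.omega0 ^ a := by
  constructor
  · rintro ⟨h0, hadd, hneg⟩
    have hprin : Ordinal.IsPrincipal (· + ·) lam := by
      intro a b ha hb
      have hA : Ordinal.toSurreal a ∈ NoLt lam := by
        simpa [NoLt, birthday_toSurreal] using ha
      have hB : Ordinal.toSurreal b ∈ NoLt lam := by
        simpa [NoLt, birthday_toSurreal] using hb
      have hsum := hadd _ hA _ hB
      exact lt_of_le_of_lt (add_le_birthday_toSurreal_add a b) hsum
    rcases Ordinal.principal_add_iff_zero_or_omega0_opow.1 hprin with h | ⟨a, ha⟩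
    · exact absurd h hlam
    · exact ⟨a, ha.symm⟩
  · rintro ⟨a, rfl⟩
    refine ⟨?_, ?_, ?_⟩
    · show (0 : Surreal).birthday < _
      rw [birthday_zero']
      exact Ordinal.opow_pos a Ordinal.omega0_pos
    · intro x hx y hy
      exact lt_of_le_of_lt (birthday_add_le x y) (nadd_lt_omega0_opow hx hy)
    · intro x hx
      show (-x).birthday < _
      rwa [birthday_neg']
end

section
/- (Generalized Newton–Puiseux theorem, MacLane) Let Γ be a divisible linearly ordered additive abelian group and K an algebraically closed field of characteristic 0. Then the Hahn series field HahnSeries Γ K is algebraically closed. -/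
open Polynomial Finset

namespace NPAux

variable {Γ K : Type*} [AddCommGroup Γ] [LinearOrder Γ] [IsOrderedAddMonoid Γ] [Field K]

theorem coeff_finsum {ι : Type*} (s : Finset ι) (f : ι → HahnSeries Γ K) (g : Γ) :
    (∑ i ∈ s, f i).coeff g = ∑ i ∈ s, (f i).coeff g := by
  classical
  induction s using Finset.induction with
  | empty => simp
  | insert _ _ h ih => simp [Finset.sum_insert h, HahnSeries.coeff_add, ih]

theorem mul_coeff_lt {x y : HahnSeries Γ K} {gx gy : Γ}
    (hx : ∀ g < gx, x.coeff g = 0) (hy : ∀ g < gy, y.coeff g = 0) :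
    ∀ g < gx + gy, (x * y).coeff g = 0 := by
  intro g hg
  rw [HahnSeries.coeff_mul]
  refine Finset.sum_eq_zero fun ij hij => ?_
  simp only [Finset.mem_addAntidiagonal] at hij
  obtain ⟨h1, h2, h3⟩ := hij
  rcases lt_or_ge ij.1 gx with h | h
  · rw [hx _ h, zero_mul]
  · have : ij.2 < gy := by
      by_contra hcon
      push_neg at hcon
      have : gx + gy ≤ ij.1 + ij.2 := add_le_add h hcon
      rw [h3] at this
      exact absurd hg (not_lt.2 this)
    rw [hy _ this, mul_zero]

theorem mul_coeff_eq {x y : HahnSeries Γ K} {gx gy : Γ}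
    (hx : ∀ g < gx, x.coeff g = 0) (hy : ∀ g < gy, y.coeff g = 0) :
    (x * y).coeff (gx + gy) = x.coeff gx * y.coeff gy := by
  classical
  rw [HahnSeries.coeff_mul]
  rcases eq_or_ne (x.coeff gx) 0 with h0 | h0
  · rw [h0, zero_mul]
    refine Finset.sum_eq_zero fun ij hij => ?_
    simp only [Finset.mem_addAntidiagonal] at hij
    obtain ⟨h1, h2, h3⟩ := hij
    rcases lt_trichotomy ij.1 gx with h | h | h
    · rw [hx _ h, zero_mul]
    · rw [h, h0, zero_mul]
    · have : ij.2 < gy := by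
        by_contra hcon
        push_neg at hcon
        have h4 : gx + gy < ij.1 + ij.2 := add_lt_add_of_lt_of_le h hcon
        rw [h3] at h4
        exact lt_irrefl _ h4
      rw [hy _ this, mul_zero]
  · rcases eq_or_ne (y.coeff gy) 0 with h1 | h1
    · rw [h1, mul_zero]
      refine Finset.sum_eq_zero fun ij hij => ?_
      simp only [Finset.mem_addAntidiagonal] at hij
      obtain ⟨ha, hb, hcc⟩ := hij
      rcases lt_trichotomy ij.2 gy with h | h | h
      · rw [hy _ h, mul_zero]
      · rw [h, h1, mul_zero]
      · have : ij.1 < gx := by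
          by_contra hcon
          push_neg at hcon
          have h4 : gx + gy < ij.1 + ij.2 := add_lt_add_of_le_of_lt hcon h
          rw [hcc] at h4
          exact lt_irrefl _ h4
        rw [hx _ this, zero_mul]
    · rw [Finset.sum_eq_single (gx, gy)]
      · intro ij hij hne
        simp only [Finset.mem_addAntidiagonal] at hij
        obtain ⟨ha, hb, hcc⟩ := hij
        rcases lt_trichotomy ij.1 gx with h | h | h
        · rw [hx _ h, zero_mul]
        · exfalso
          apply hne
          have : ij.2 = gy := by
            have := hcc
            rw [h] at this
            exact add_left_cancel this
          exact Prod.ext h this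
        · have : ij.2 < gy := by
            by_contra hcon
            push_neg at hcon
            have h4 : gx + gy < ij.1 + ij.2 := add_lt_add_of_lt_of_le h hcon
            rw [hcc] at h4
            exact lt_irrefl _ h4
          rw [hy _ this, mul_zero]
      · intro hnotmem
        exfalso
        apply hnotmem
        rw [Finset.mem_addAntidiagonal]
        exact ⟨by simpa using h0, by simpa using h1, rfl⟩

theorem pow_coeff_lt {s : HahnSeries Γ K} {γ : Γ}
    (hs : ∀ g < γ, s.coeff g = 0) (j : ℕ) :
    ∀ g < j • γ, (s ^ j).coeff g = 0 := by
  induction j with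
  | zero =>
    intro g hg
    rw [zero_smul] at hg
    rw [pow_zero]
    have : g ≠ 0 := ne_of_lt hg
    rw [HahnSeries.coeff_one, if_neg this]
  | succ n ih =>
    intro g hg
    rw [succ_nsmul] at hg
    rw [pow_succ]
    exact mul_coeff_lt ih hs g hg

theorem pow_coeff_eq {s : HahnSeries Γ K} {γ : Γ}
    (hs : ∀ g < γ, s.coeff g = 0) (j : ℕ) :
    (s ^ j).coeff (j • γ) = (s.coeff γ) ^ j := by
  induction j with
  | zero => simp [HahnSeries.coeff_one]
  | succ n ih =>
    rw [pow_succ, pow_succ, succ_nsmul, mul_coeff_eq (pow_coeff_lt hs n) hs, ih]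


open scoped Classical

/-- Taylor coefficients of `p` at `t`. -/
noncomputable def acoef (p : Polynomial (HahnSeries Γ K)) (t : HahnSeries Γ K) (j : ℕ) :
    HahnSeries Γ K := (Polynomial.taylor t p).coeff j

/-- Order (valuation) of `p.eval t`. -/
noncomputable def Vord (p : Polynomial (HahnSeries Γ K)) (t : HahnSeries Γ K) : Γ :=
  (p.eval t).order

/-- Indices contributing to the Newton polygon. -/
noncomputable def Jset (p : Polynomial (HahnSeries Γ K)) (t : HahnSeries Γ K) : Finset ℕ :=
  (Finset.Icc 1 p.natDegree).filter fun j => acoef p t j ≠ 0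

/-- The (maximal) Newton slope of `p` at `t`, computed using the division function `D`. -/
noncomputable def slope (D : Γ → ℕ → Γ) (p : Polynomial (HahnSeries Γ K))
    (t : HahnSeries Γ K) : Γ :=
  if h : (Jset p t).Nonempty then
    (Jset p t).sup' h fun j => D (Vord p t - (acoef p t j).order) j
  else 0

/-- The critical (residue) polynomial of `p` at `t`. -/
noncomputable def Qpoly (D : Γ → ℕ → Γ) (p : Polynomial (HahnSeries Γ K))
    (t : HahnSeries Γ K) : Polynomial K :=
  ∑ j ∈ Finset.range (p.natDegree + 1),
    Polynomial.monomial j ((acoef p t j).coeff (Vord p t - j • slope D p t))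

variable {D : Γ → ℕ → Γ} {p : Polynomial (HahnSeries Γ K)} {t : HahnSeries Γ K}

theorem acoef_zero' : acoef p t 0 = p.eval t := by
  rw [acoef, taylor_coeff_zero]

theorem acoef_natDegree (hp : p.Monic) : acoef p t p.natDegree = 1 := by
  rw [acoef, taylor_apply]
  have hm : (p.comp (X + C t)).Monic := hp.comp_X_add_C t
  have hd : (p.comp (X + C t)).natDegree = p.natDegree := by
    rw [← taylor_apply, natDegree_taylor]
  rw [← hd]
  exact hm.coeff_natDegree

theorem acoef_eq_zero_of_gt (h : p.natDegree < j) : acoef p t j = 0 := by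
  rw [acoef]
  apply coeff_eq_zero_of_natDegree_lt
  rwa [natDegree_taylor]

theorem Jset_nonempty (hp : p.Monic) (hdeg : 1 ≤ p.natDegree) : (Jset p t).Nonempty := by
  classical
  refine ⟨p.natDegree, ?_⟩
  rw [Jset]
  simp only [Finset.mem_filter, Finset.mem_Icc]
  refine ⟨⟨hdeg, le_rfl⟩, ?_⟩
  rw [acoef_natDegree hp]
  exact one_ne_zero

theorem slope_eq (hp : p.Monic) (hdeg : 1 ≤ p.natDegree) :
    slope D p t = (Jset p t).sup' (Jset_nonempty hp hdeg)
      fun j => D (Vord p t - (acoef p t j).order) j := by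
  rw [slope, dif_pos (Jset_nonempty hp hdeg)]

theorem mem_Jset_iff {j : ℕ} :
    j ∈ Jset p t ↔ (1 ≤ j ∧ j ≤ p.natDegree) ∧ acoef p t j ≠ 0 := by
  classical
  rw [Jset]
  simp only [Finset.mem_filter, Finset.mem_Icc]

/-- Scaled version of `slope`'s defining property: for j in Jset,
`Vord - order (acoef j) ≤ j • slope`. -/
theorem slope_ge (hD : ∀ g n, 0 < n → n • D g n = g) (hp : p.Monic) (hdeg : 1 ≤ p.natDegree)
    {j : ℕ} (hj : j ∈ Jset p t) :
    Vord p t - (acoef p t j).order ≤ j • slope D p t := by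
  have h1 : D (Vord p t - (acoef p t j).order) j ≤ slope D p t := by
    rw [slope_eq hp hdeg]
    exact Finset.le_sup' (fun j => D (Vord p t - (acoef p t j).order) j) hj
  have hjpos : 0 < j := (mem_Jset_iff.1 hj).1.1
  calc Vord p t - (acoef p t j).order
      = j • D (Vord p t - (acoef p t j).order) j := (hD _ j hjpos).symm
    _ ≤ j • slope D p t := nsmul_le_nsmul_right h1 j

/-- The slope is attained at some index. -/
theorem slope_attained (hD : ∀ g n, 0 < n → n • D g n = g) (hp : p.Monic)
    (hdeg : 1 ≤ p.natDegree) :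
    ∃ j ∈ Jset p t, j • slope D p t = Vord p t - (acoef p t j).order := by
  obtain ⟨j, hj, hval⟩ := Finset.exists_mem_eq_sup' (Jset_nonempty (t := t) hp hdeg)
    fun j => D (Vord p t - (acoef p t j).order) j
  refine ⟨j, hj, ?_⟩
  rw [slope_eq hp hdeg, hval, hD _ j (mem_Jset_iff.1 hj).1.1]

/-- Low coefficients of the Taylor coefficients vanish below `Vord - j • slope`. -/
theorem acoef_coeff_lt (hD : ∀ g n, 0 < n → n • D g n = g) (hp : p.Monic)
    (hdeg : 1 ≤ p.natDegree) (ht : p.eval t ≠ 0) (j : ℕ) :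
    ∀ g < Vord p t - j • slope D p t, (acoef p t j).coeff g = 0 := by
  intro g hg
  rcases eq_or_ne (acoef p t j) 0 with h0 | h0
  · rw [h0, HahnSeries.coeff_zero]
  · rcases Nat.eq_zero_or_pos j with rfl | hjpos
    · rw [zero_smul, sub_zero] at hg
      rw [acoef_zero'] at h0 ⊢
      exact HahnSeries.coeff_eq_zero_of_lt_order hg
    · have hj : j ∈ Jset p t := by
        rw [mem_Jset_iff]
        refine ⟨⟨hjpos, ?_⟩, h0⟩
        by_contra hcon
        push_neg at hcon
        exact h0 (acoef_eq_zero_of_gt hcon)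
      have h2 := slope_ge hD hp hdeg hj
      have horder : Vord p t - j • slope D p t ≤ (acoef p t j).order := sub_le_comm.mp h2

      exact HahnSeries.coeff_eq_zero_of_lt_order (lt_of_lt_of_le hg horder)

theorem Qpoly_coeff (j : ℕ) :
    (Qpoly D p t).coeff j = if j ≤ p.natDegree then
      (acoef p t j).coeff (Vord p t - j • slope D p t) else 0 := by
  classical
  rw [Qpoly, finset_sum_coeff]
  simp only [coeff_monomial]
  rw [Finset.sum_ite_eq' (Finset.range (p.natDegree + 1))]
  simp [Nat.lt_succ_iff]

theorem Qpoly_coeff_zero (ht : p.eval t ≠ 0) :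
    (Qpoly D p t).coeff 0 ≠ 0 := by
  rw [Qpoly_coeff, if_pos (Nat.zero_le _), zero_smul, sub_zero, acoef_zero']
  exact HahnSeries.coeff_order_eq_zero.not.mpr ht

theorem Qpoly_ne_zero (ht : p.eval t ≠ 0) : Qpoly D p t ≠ 0 := fun h =>
  Qpoly_coeff_zero (D := D) ht (by rw [h, coeff_zero])

theorem Qpoly_natDegree_le : (Qpoly D p t).natDegree ≤ p.natDegree := by
  refine natDegree_le_iff_coeff_eq_zero.2 fun j hj => ?_
  rw [Qpoly_coeff, if_neg (not_le.2 hj)]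

theorem Qpoly_degree_pos (hD : ∀ g n, 0 < n → n • D g n = g) (hp : p.Monic)
    (hdeg : 1 ≤ p.natDegree) (ht : p.eval t ≠ 0) : 0 < (Qpoly D p t).degree := by
  obtain ⟨j, hj, hval⟩ := slope_attained (D := D) (t := t) hD hp hdeg
  have hcoeff : (Qpoly D p t).coeff j ≠ 0 := by
    rw [Qpoly_coeff, if_pos (mem_Jset_iff.1 hj).1.2, hval]
    have : Vord p t - (Vord p t - (acoef p t j).order) = (acoef p t j).order := by abel
    rw [this]
    exact HahnSeries.coeff_order_eq_zero.not.mpr (mem_Jset_iff.1 hj).2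
  calc (0 : WithBot ℕ) < (j : WithBot ℕ) := by
        exact_mod_cast (mem_Jset_iff.1 hj).1.1
    _ ≤ (Qpoly D p t).degree := le_degree_of_ne_zero hcoeff


section Key

variable {D : Γ → ℕ → Γ} {p : Polynomial (HahnSeries Γ K)} {t s : HahnSeries Γ K}

theorem eval_add_expand (p : Polynomial (HahnSeries Γ K)) (t s : HahnSeries Γ K) :
    p.eval (t + s) = ∑ j ∈ Finset.range (p.natDegree + 1), acoef p t j * s ^ j := by
  have h1 : p.eval (t + s) = (Polynomial.taylor t p).eval s := by
    rw [taylor_eval, add_comm]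
  rw [h1, eval_eq_sum_range' (by rw [natDegree_taylor]; exact Nat.lt_succ_self _ : 
    (Polynomial.taylor t p).natDegree < p.natDegree + 1)]
  rfl

theorem eval_add_coeff_lt (hD : ∀ g n, 0 < n → n • D g n = g) (hp : p.Monic)
    (hdeg : 1 ≤ p.natDegree) (ht : p.eval t ≠ 0)
    (hs : ∀ g < slope D p t, s.coeff g = 0) :
    ∀ g < Vord p t, (p.eval (t + s)).coeff g = 0 := by
  intro g hg
  rw [eval_add_expand, coeff_finsum]
  refine Finset.sum_eq_zero fun j _ => ?_
  have h1 := acoef_coeff_lt hD hp hdeg ht j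
  have h2 := pow_coeff_lt hs j
  have key : Vord p t - j • slope D p t + j • slope D p t = Vord p t := by abel
  refine mul_coeff_lt h1 h2 g ?_
  rw [key]; exact hg

theorem eval_add_coeff_V (hD : ∀ g n, 0 < n → n • D g n = g) (hp : p.Monic)
    (hdeg : 1 ≤ p.natDegree) (ht : p.eval t ≠ 0)
    (hs : ∀ g < slope D p t, s.coeff g = 0) :
    (p.eval (t + s)).coeff (Vord p t) = (Qpoly D p t).eval (s.coeff (slope D p t)) := by
  rw [eval_add_expand, coeff_finsum,
    eval_eq_sum_range' (Nat.lt_succ_of_le (Qpoly_natDegree_le (D := D) (p := p) (t := t)))]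
  refine Finset.sum_congr rfl fun j hj => ?_
  have h1 := acoef_coeff_lt hD hp hdeg ht j
  have h2 := pow_coeff_lt hs j
  have key : Vord p t - j • slope D p t + j • slope D p t = Vord p t := by abel
  rw [← key, mul_coeff_eq h1 h2, pow_coeff_eq hs,
    Qpoly_coeff, if_pos (Nat.lt_succ_iff.1 (Finset.mem_range.1 hj))]

/-- If the leading coefficient of the correction is a root of the critical polynomial,
the valuation strictly increases. -/
theorem Vord_lt (hD : ∀ g n, 0 < n → n • D g n = g) (hp : p.Monic)
    (hdeg : 1 ≤ p.natDegree) (ht : p.eval t ≠ 0)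
    (hs : ∀ g < slope D p t, s.coeff g = 0)
    (hroot : (Qpoly D p t).eval (s.coeff (slope D p t)) = 0)
    (hne : p.eval (t + s) ≠ 0) :
    Vord p t < Vord p (t + s) := by
  by_contra hcon
  push_neg at hcon
  have hc := HahnSeries.coeff_order_eq_zero.not.mpr hne
  rcases lt_or_eq_of_le hcon with h | h
  · exact hc (eval_add_coeff_lt hD hp hdeg ht hs _ h)
  · apply hc
    show (p.eval (t + s)).coeff (Vord p (t+s)) = 0
    rw [h, eval_add_coeff_V hD hp hdeg ht hs, hroot]


theorem natCast_mul_coeff (n : ℕ) (x : HahnSeries Γ K) (g : Γ) :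
    ((n : HahnSeries Γ K) * x).coeff g = (n : K) * x.coeff g := by
  rw [← nsmul_eq_mul]
  induction n with
  | zero => simp
  | succ k ih =>
    rw [succ_nsmul, HahnSeries.coeff_add, ih]
    push_cast
    ring

theorem acoef_add_expand (p : Polynomial (HahnSeries Γ K)) (t s : HahnSeries Γ K) (m : ℕ) :
    acoef p (t + s) m = ∑ i ∈ Finset.range (p.natDegree + 1),
      (((i + m).choose m : HahnSeries Γ K) * (acoef p t (i + m) * s ^ i)) := by
  have h1 : acoef p (t + s) m = (Polynomial.taylor s (Polynomial.taylor t p)).coeff m := by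
    rw [acoef, taylor_taylor, add_comm t s]
  rw [h1, taylor_coeff]
  have hd : (hasseDeriv m (Polynomial.taylor t p)).natDegree < p.natDegree + 1 := by
    have := natDegree_hasseDeriv_le (Polynomial.taylor t p) m
    rw [natDegree_taylor] at this
    omega
  rw [eval_eq_sum_range' hd]
  refine Finset.sum_congr rfl fun i _ => ?_
  rw [hasseDeriv_coeff, ← acoef, mul_assoc]

/-- Order of the critical Taylor coefficient after a correction step: statement of
vanishing below the expected order. -/
theorem acoef_add_coeff_lt (hD : ∀ g n, 0 < n → n • D g n = g) (hp : p.Monic)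
    (hdeg : 1 ≤ p.natDegree) (ht : p.eval t ≠ 0)
    (hs : ∀ g < slope D p t, s.coeff g = 0) (m : ℕ) :
    ∀ g < Vord p t - m • slope D p t, (acoef p (t + s) m).coeff g = 0 := by
  intro g hg
  rw [acoef_add_expand, coeff_finsum]
  refine Finset.sum_eq_zero fun i _ => ?_
  rw [natCast_mul_coeff]
  have h1 := acoef_coeff_lt hD hp hdeg ht (i + m)
  have h2 := pow_coeff_lt hs i
  have key : Vord p t - (i + m) • slope D p t + i • slope D p t
      = Vord p t - m • slope D p t := by
    rw [add_nsmul]; abel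
  rw [mul_coeff_lt h1 h2 g (by rw [key]; exact hg), mul_zero]

/-- The critical coefficient after a correction step equals a Hasse derivative of the
critical polynomial, evaluated at the correction constant. -/
theorem acoef_add_coeff_eq (hD : ∀ g n, 0 < n → n • D g n = g) (hp : p.Monic)
    (hdeg : 1 ≤ p.natDegree) (ht : p.eval t ≠ 0)
    (hs : ∀ g < slope D p t, s.coeff g = 0) (m : ℕ) :
    (acoef p (t + s) m).coeff (Vord p t - m • slope D p t)
      = (hasseDeriv m (Qpoly D p t)).eval (s.coeff (slope D p t)) := by
  have hd : (hasseDeriv m (Qpoly D p t)).natDegree < p.natDegree + 1 := by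
    have h1 := natDegree_hasseDeriv_le (Qpoly D p t) m
    have h2 := Qpoly_natDegree_le (D := D) (p := p) (t := t)
    omega
  rw [acoef_add_expand, coeff_finsum, eval_eq_sum_range' hd]
  refine Finset.sum_congr rfl fun i _ => ?_
  rw [natCast_mul_coeff]
  have h1 := acoef_coeff_lt hD hp hdeg ht (i + m)
  have h2 := pow_coeff_lt hs i
  have key : Vord p t - (i + m) • slope D p t + i • slope D p t
      = Vord p t - m • slope D p t := by
    rw [add_nsmul]; abel
  rw [← key, mul_coeff_eq h1 h2, pow_coeff_eq hs, hasseDeriv_coeff]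
  rcases le_or_gt (i + m) p.natDegree with h | h
  · rw [Qpoly_coeff, if_pos h]
    ring
  · rw [Qpoly_coeff, if_neg (not_le.2 h), acoef_eq_zero_of_gt h, HahnSeries.coeff_zero]
    ring

theorem hasseDeriv_rootMultiplicity_ne_zero {Q : Polynomial K} {c : K} (hQ : Q ≠ 0) :
    (hasseDeriv (rootMultiplicity c Q) Q).eval c ≠ 0 := by
  rw [← taylor_coeff]
  have h1 : rootMultiplicity c Q = (Polynomial.taylor c Q).natTrailingDegree := by
    rw [rootMultiplicity_eq_natTrailingDegree, taylor_apply]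
  rw [h1]
  rw [Polynomial.coeff_natTrailingDegree_ne_zero]
  intro hcon
  exact hQ (by simpa using taylor_injective c (by rw [hcon]; simp))

theorem order_eq_of_coeff (x : HahnSeries Γ K) (g : Γ)
    (hlow : ∀ g' < g, x.coeff g' = 0) (hg : x.coeff g ≠ 0) : x.order = g := by
  have hx : x ≠ 0 := HahnSeries.ne_zero_of_coeff_ne_zero hg
  have h1 : x.order ≤ g := HahnSeries.order_le_of_coeff_ne_zero hg
  rcases lt_or_eq_of_le h1 with h | h
  · exact absurd (HahnSeries.coeff_order_eq_zero.not.mpr hx) (by rw [hlow _ h]; simp)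
  · exact h

/-- The key slope-increase lemma: applying a correction whose leading coefficient is a
root of the critical polynomial strictly increases the Newton slope. -/
theorem slope_lt (hD : ∀ g n, 0 < n → n • D g n = g) (hp : p.Monic)
    (hdeg : 1 ≤ p.natDegree) (ht : p.eval t ≠ 0)
    (hs : ∀ g < slope D p t, s.coeff g = 0)
    (hroot : (Qpoly D p t).eval (s.coeff (slope D p t)) = 0)
    (hne : p.eval (t + s) ≠ 0) :
    slope D p t < slope D p (t + s) := by
  set c := s.coeff (slope D p t) with hc
  set m := rootMultiplicity c (Qpoly D p t) with hm
  have hQne : Qpoly D p t ≠ 0 := Qpoly_ne_zero ht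
  have hm1 : 1 ≤ m := (rootMultiplicity_pos hQne).2 hroot
  have hmN : m ≤ p.natDegree := by
    have h1 : (X - C c) ^ m ∣ Qpoly D p t := pow_rootMultiplicity_dvd _ _
    have h2 := natDegree_le_of_dvd h1 hQne
    rw [natDegree_pow, natDegree_X_sub_C, mul_one] at h2
    exact le_trans h2 Qpoly_natDegree_le
  have hcoeff : (acoef p (t + s) m).coeff (Vord p t - m • slope D p t) ≠ 0 := by
    rw [acoef_add_coeff_eq hD hp hdeg ht hs m]
    exact hasseDeriv_rootMultiplicity_ne_zero hQne
  have horder : (acoef p (t + s) m).order = Vord p t - m • slope D p t :=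
    order_eq_of_coeff _ _ (acoef_add_coeff_lt hD hp hdeg ht hs m) hcoeff
  have hmem : m ∈ Jset p (t + s) := by
    rw [mem_Jset_iff]
    exact ⟨⟨hm1, hmN⟩, HahnSeries.ne_zero_of_coeff_ne_zero hcoeff⟩
  have h1 : Vord p (t + s) - (acoef p (t + s) m).order ≤ m • slope D p (t + s) :=
    slope_ge hD hp hdeg hmem
  rw [horder] at h1
  have h2 : Vord p t < Vord p (t + s) := Vord_lt hD hp hdeg ht hs hroot hne
  have h3 : m • slope D p t < m • slope D p (t + s) := by
    calc m • slope D p t = Vord p t - (Vord p t - m • slope D p t) := by abel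
    _ < Vord p (t + s) - (Vord p t - m • slope D p t) := by
        exact sub_lt_sub_right h2 _
    _ ≤ m • slope D p (t + s) := h1
  exact lt_of_nsmul_lt_nsmul_right m h3

end Key
section Zorn

variable {D : Γ → ℕ → Γ} {p : Polynomial (HahnSeries Γ K)}

/-- The strict extension relation between approximate roots. -/
def RelS (D : Γ → ℕ → Γ) (p : Polynomial (HahnSeries Γ K)) (t t' : HahnSeries Γ K) : Prop :=
  (∀ g < slope D p t, (t' - t).coeff g = 0) ∧ (t' - t).coeff (slope D p t) ≠ 0 ∧
    (Qpoly D p t).eval ((t' - t).coeff (slope D p t)) = 0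

/-- The extension relation (reflexive closure of `RelS`). -/
def Rel (D : Γ → ℕ → Γ) (p : Polynomial (HahnSeries Γ K)) (t t' : HahnSeries Γ K) : Prop :=
  t = t' ∨ RelS D p t t'

/-- Approximate roots all of whose exponents are below the current Newton slope. -/
def inS (D : Γ → ℕ → Γ) (p : Polynomial (HahnSeries Γ K)) (t : HahnSeries Γ K) : Prop :=
  ∀ g ∈ t.support, g < slope D p t

variable (hD : ∀ g n, 0 < n → n • D g n = g) (hp : p.Monic) (hdeg : 1 ≤ p.natDegree)
  (hroots : ∀ x, p.eval x ≠ 0)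

include hD hp hdeg hroots

theorem RelS.slope_lt' {t t' : HahnSeries Γ K} (h : RelS D p t t') :
    slope D p t < slope D p t' := by
  obtain ⟨h1, h2, h3⟩ := h
  have key : t + (t' - t) = t' := by abel
  have := slope_lt hD hp hdeg (hroots t) h1 h3 (by rw [key]; exact hroots t')
  rwa [key] at this

theorem RelS.Vord_lt' {t t' : HahnSeries Γ K} (h : RelS D p t t') :
    Vord p t < Vord p t' := by
  obtain ⟨h1, h2, h3⟩ := h
  have key : t + (t' - t) = t' := by abel
  have := Vord_lt hD hp hdeg (hroots t) h1 h3 (by rw [key]; exact hroots t')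
  rwa [key] at this

omit hD hp hdeg hroots in
theorem RelS.coeff_eq {t t' : HahnSeries Γ K} (h : RelS D p t t') :
    ∀ g < slope D p t, t'.coeff g = t.coeff g := by
  intro g hg
  have := h.1 g hg
  rw [HahnSeries.coeff_sub] at this
  exact sub_eq_zero.mp this

theorem Rel.trans' {t t' t'' : HahnSeries Γ K} (h : Rel D p t t') (h' : Rel D p t' t'') :
    Rel D p t t'' := by
  rcases h with rfl | h
  · exact h'
  rcases h' with rfl | h'
  · exact Or.inr h
  refine Or.inr ⟨?_, ?_, ?_⟩
  · intro g hg
    have key : t'' - t = (t'' - t') + (t' - t) := by abel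
    rw [key, HahnSeries.coeff_add, h.1 g hg,
      h'.1 g (lt_trans hg (h.slope_lt' hD hp hdeg hroots)), add_zero]
  · have key : t'' - t = (t'' - t') + (t' - t) := by abel
    rw [key, HahnSeries.coeff_add,
      h'.1 _ (h.slope_lt' hD hp hdeg hroots), zero_add]
    exact h.2.1
  · have key : t'' - t = (t'' - t') + (t' - t) := by abel
    rw [key, HahnSeries.coeff_add,
      h'.1 _ (h.slope_lt' hD hp hdeg hroots), zero_add]
    exact h.2.2

theorem chains_bounded (c : Set {t : HahnSeries Γ K // inS D p t})
    (hc : IsChain (fun a b => Rel D p a.1 b.1) c) :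
    ∃ ub : {t : HahnSeries Γ K // inS D p t}, ∀ a ∈ c, Rel D p a.1 ub.1 := by
  classical
  by_cases hmax : ∃ m ∈ c, ∀ a ∈ c, Rel D p a.1 m.1
  · obtain ⟨m, _, hm⟩ := hmax
    exact ⟨m, hm⟩
  push_neg at hmax
  -- every element of the chain has a strict extension in the chain
  have step : ∀ t ∈ c, ∃ t' ∈ c, RelS D p t.1 t'.1 := by
    intro t htc
    obtain ⟨a, hac, hna⟩ := hmax t htc
    have hne : a ≠ t := by
      rintro rfl
      exact hna (Or.inl rfl)
    have h1 : Rel D p t.1 a.1 := by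
      rcases hc htc hac (Ne.symm hne) with h | h
      · exact h
      · exact absurd h hna
    rcases h1 with h | h
    · exact absurd (Subtype.ext h).symm hne
    · exact ⟨a, hac, h⟩
  -- limit construction
  let f : Γ → K := fun g =>
    if h : ∃ t : {t : HahnSeries Γ K // inS D p t}, t ∈ c ∧ t.1.coeff g ≠ 0
    then h.choose.1.coeff g else 0
  have fspec : ∀ g, f g ≠ 0 →
      ∃ t : {t : HahnSeries Γ K // inS D p t}, t ∈ c ∧ t.1.coeff g ≠ 0 ∧ f g = t.1.coeff g := by
    intro g hg
    by_cases h : ∃ t : {t : HahnSeries Γ K // inS D p t}, t ∈ c ∧ t.1.coeff g ≠ 0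
    · exact ⟨h.choose, h.choose_spec.1, h.choose_spec.2, dif_pos h⟩
    · exact absurd (dif_neg h) hg
  -- agreement below slopes
  have W : ∀ t ∈ c, ∀ g, g < slope D p t.1 → f g = t.1.coeff g := by
    intro t htc g hg
    by_cases h : ∃ t' : {t : HahnSeries Γ K // inS D p t}, t' ∈ c ∧ t'.1.coeff g ≠ 0
    · have hfg : f g = h.choose.1.coeff g := dif_pos h
      obtain ⟨ht'c, ht'g⟩ := h.choose_spec
      set t' := h.choose with ht'
      rcases eq_or_ne t t' with rfl | hne
      · exact hfg
      · rcases hc htc ht'c hne with hr | hr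
        · rcases hr with heq | hr
          · rw [hfg, ← heq]
          · rw [hfg, hr.coeff_eq g hg]
        · rcases hr with heq | hr
          · rw [hfg, heq]
          · have hgs : g < slope D p t'.1 := t'.2 g ht'g
            rw [hfg, ← hr.coeff_eq g hgs]
    · push_neg at h
      have h0 : f g = 0 := dif_neg (by push_neg; exact h)
      rw [h0]
      exact (h t htc).symm
  -- well-orderedness of the support of f
  have hpwo : (Function.support f).IsPWO := by
    refine Set.IsWF.isPWO ?_
    rw [Set.isWF_iff_no_descending_seq]
    intro u hu hmem
    have h0 : f (u (OrderDual.toDual 0)) ≠ 0 := hmem 0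
    obtain ⟨t0, ht0c, ht0g, _⟩ := fspec _ h0
    have hall : ∀ n : ℕ, u (OrderDual.toDual n) ∈ t0.1.support := by
      intro n
      have hn : f (u (OrderDual.toDual n)) ≠ 0 := hmem n
      obtain ⟨t1, ht1c, ht1g, ht1e⟩ := fspec _ hn
      have hle : u (OrderDual.toDual n) ≤ u (OrderDual.toDual 0) :=
        hu.antitone (by exact_mod_cast Nat.zero_le n)
      rcases eq_or_ne t0 t1 with rfl | hne
      · exact ht1g
      · rcases hc ht0c ht1c hne with hr | hr
        · rcases hr with heq | hr
          · rw [HahnSeries.mem_support, heq]; exact ht1g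
          · have hlt : u (OrderDual.toDual n) < slope D p t0.1 :=
              lt_of_le_of_lt hle (t0.2 _ ht0g)
            rw [HahnSeries.mem_support, ← hr.coeff_eq _ hlt]
            exact ht1g
        · rcases hr with heq | hr
          · rw [HahnSeries.mem_support, ← heq]; exact ht1g
          · have hlt : u (OrderDual.toDual n) < slope D p t1.1 := t1.2 _ ht1g
            rw [HahnSeries.mem_support, hr.coeff_eq _ hlt]
            exact ht1g
    exact (Set.isWF_iff_no_descending_seq.1 t0.1.isPWO_support.isWF) u hu hall
  set tl : HahnSeries Γ K := ⟨f, hpwo⟩ with htl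
  have htlc : ∀ g, tl.coeff g = f g := fun g => rfl
  -- tl strictly extends every element of the chain
  have hext : ∀ t ∈ c, RelS D p t.1 tl := by
    intro t htc
    obtain ⟨t', ht'c, hstrict⟩ := step t htc
    have hslt : slope D p t.1 < slope D p t'.1 := hstrict.slope_lt' hD hp hdeg hroots
    refine ⟨?_, ?_, ?_⟩
    · intro g hg
      rw [HahnSeries.coeff_sub, htlc, W t htc g hg, sub_self]
    · rw [HahnSeries.coeff_sub, htlc, W t' ht'c _ hslt]
      have := hstrict.2.1
      rwa [HahnSeries.coeff_sub] at this
    · rw [HahnSeries.coeff_sub, htlc, W t' ht'c _ hslt]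
      have := hstrict.2.2
      rwa [HahnSeries.coeff_sub] at this
  have htlS : inS D p tl := by
    intro g hg
    have hfg : f g ≠ 0 := hg
    obtain ⟨t, htc, htg, _⟩ := fspec g hfg
    have h1 : g < slope D p t.1 := t.2 g htg
    exact lt_trans h1 ((hext t htc).slope_lt' hD hp hdeg hroots)
  exact ⟨⟨tl, htlS⟩, fun a ha => Or.inr (hext a ha)⟩

theorem no_roots_contradiction [IsAlgClosed K] : False := by
  obtain ⟨M, hM⟩ := exists_maximal_of_chains_bounded
    (r := fun a b : {t : HahnSeries Γ K // inS D p t} => Rel D p a.1 b.1)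
    (chains_bounded hD hp hdeg hroots)
    (fun {a b c} h1 h2 => Rel.trans' hD hp hdeg hroots h1 h2)
  -- successor step at the maximal element
  have hQd : (Qpoly D p M.1).degree ≠ 0 :=
    ne_of_gt (Qpoly_degree_pos hD hp hdeg (hroots M.1))
  obtain ⟨cc, hcc⟩ := IsAlgClosed.exists_root _ hQd
  have hccne : cc ≠ 0 := by
    rintro rfl
    rw [IsRoot, ← coeff_zero_eq_eval_zero] at hcc
    exact Qpoly_coeff_zero (hroots M.1) hcc
  set γ := slope D p M.1 with hγ
  set s : HahnSeries Γ K := HahnSeries.single γ cc with hs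
  have hs_low : ∀ g < γ, s.coeff g = 0 := fun g hgg =>
    HahnSeries.coeff_single_of_ne (ne_of_lt hgg)
  have hs_at : s.coeff γ = cc := HahnSeries.coeff_single_same γ cc
  have hstrict : RelS D p M.1 (M.1 + s) := by
    refine ⟨?_, ?_, ?_⟩
    · intro g hgg
      rw [add_sub_cancel_left]
      exact hs_low g hgg
    · rw [add_sub_cancel_left, hs_at]; exact hccne
    · rw [add_sub_cancel_left, hs_at]; exact hcc
  have hS' : inS D p (M.1 + s) := by
    have hslt : slope D p M.1 < slope D p (M.1 + s) :=
      slope_lt hD hp hdeg (hroots M.1) hs_low (by rw [hs_at]; exact hcc) (hroots _)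
    intro g hg
    rcases HahnSeries.support_add_subset _ _ hg with h | h
    · exact lt_trans (M.2 g h) hslt
    · have : g = γ := HahnSeries.eq_of_mem_support_single h
      rw [this]; exact hslt
  have hrel := hM ⟨M.1 + s, hS'⟩ (Or.inr hstrict)
  rcases hrel with heq | hback
  · have : s = 0 := by
      have := congrArg (fun x => x - M.1) heq
      simpa using this
    rw [this] at hs_at
    exact hccne (by rw [← hs_at]; simp)
  · exact lt_asymm (hstrict.Vord_lt' hD hp hdeg hroots)
      (hback.Vord_lt' hD hp hdeg hroots)

end Zorn

end NPAux


/-- Generalized Newton–Puiseux theorem (MacLane): if `Γ` is a divisible linearly ordered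
abelian group and `K` an algebraically closed field of characteristic 0, then the Hahn
series field `HahnSeries Γ K` is algebraically closed. -/
theorem hahnSeries_isAlgClosed {Γ K : Type*} [AddCommGroup Γ] [LinearOrder Γ]
    [IsOrderedAddMonoid Γ]
    [Field K] [IsAlgClosed K] [CharZero K]
    (hdiv : ∀ (g : Γ) (n : ℕ), 0 < n → ∃ g' : Γ, n • g' = g) :
    IsAlgClosed (HahnSeries Γ K) := by
  apply IsAlgClosed.of_exists_root
  intro p hmonic hirr
  by_contra hroot
  push_neg at hroot
  set D : Γ → ℕ → Γ := fun g n => if h : 0 < n then (hdiv g n h).choose else 0 with hDdef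
  have hD : ∀ g n, 0 < n → n • D g n = g := by
    intro g n hn
    simp only [hDdef, dif_pos hn]
    exact (hdiv g n hn).choose_spec
  exact NPAux.no_roots_contradiction hD hmonic hirr.natDegree_pos hroot
end

section
/- Let Γ be a divisible linearly ordered additive abelian group and K a real closed field of characteristic 0. Then the Hahn series field HahnSeries Γ K is real closed: −1 is not a square in HahnSeries Γ K and the field (HahnSeries Γ K)[X]/(X²+1) obtained by adjoining a square root of −1 is algebraically closed. -/
open Polynomial

namespace HSRC

variable {Γ L : Type*} [AddCommGroup Γ] [LinearOrder Γ] [IsOrderedAddMonoid Γ] [Field L]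

/-- `vge x d` means every coefficient of `x` below `d` vanishes (i.e. `order x ≥ d` or `x = 0`). -/
def vge (x : HahnSeries Γ L) (d : Γ) : Prop := ∀ g, g < d → x.coeff g = 0

lemma vge_zero (d : Γ) : vge (0 : HahnSeries Γ L) d := fun _ _ => rfl

lemma vge_mono {x : HahnSeries Γ L} {d d' : Γ} (h : vge x d) (h' : d' ≤ d) : vge x d' :=
  fun g hg => h g (lt_of_lt_of_le hg h')

lemma vge_order (x : HahnSeries Γ L) : vge x x.order := by
  intro g hg
  by_cases hx : x = 0
  · simp [hx]
  by_contra hne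
  exact absurd (HahnSeries.order_le_of_coeff_ne_zero hne) (not_le.2 hg)

lemma order_eq_of_vge {x : HahnSeries Γ L} {d : Γ} (h : vge x d) (h' : x.coeff d ≠ 0) :
    x.order = d := by
  have hx : x ≠ 0 := fun h0 => h' (by simp [h0])
  refine le_antisymm (HahnSeries.order_le_of_coeff_ne_zero h') (le_of_not_gt fun hlt => ?_)
  exact (mt HahnSeries.coeff_order_eq_zero.1) hx (h _ hlt)

lemma vge_of_order_le {x : HahnSeries Γ L} {d : Γ} (h : d ≤ x.order) : vge x d :=
  vge_mono (vge_order x) h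

lemma vge_add {x y : HahnSeries Γ L} {d : Γ} (hx : vge x d) (hy : vge y d) : vge (x + y) d := by
  intro g hg; rw [HahnSeries.coeff_add, hx g hg, hy g hg, add_zero]

lemma coeff_sum {ι : Type*} (s : Finset ι) (f : ι → HahnSeries Γ L) (g : Γ) :
    (∑ i ∈ s, f i).coeff g = ∑ i ∈ s, (f i).coeff g := by
  classical
  induction s using Finset.induction with
  | empty => simp
  | insert _ _ hi ih => simp [Finset.sum_insert hi, HahnSeries.coeff_add, ih]

lemma vge_sum {ι : Type*} {s : Finset ι} {f : ι → HahnSeries Γ L} {d : Γ}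
    (h : ∀ i ∈ s, vge (f i) d) : vge (∑ i ∈ s, f i) d := by
  intro g hg
  rw [coeff_sum]
  exact Finset.sum_eq_zero fun i hi => h i hi g hg

lemma vge_mul {x y : HahnSeries Γ L} {d e : Γ} (hx : vge x d) (hy : vge y e) :
    vge (x * y) (d + e) := by
  intro g hg
  rw [HahnSeries.coeff_mul]
  refine Finset.sum_eq_zero fun ij hij => ?_
  rw [Finset.mem_addAntidiagonal] at hij
  obtain ⟨h1, h2, h3⟩ := hij
  by_cases hd : ij.1 < d
  · rw [hx _ hd, zero_mul]
  by_cases he : ij.2 < e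
  · rw [hy _ he, mul_zero]
  exact absurd (h3 ▸ add_le_add (not_lt.1 hd) (not_lt.1 he)) (not_le.2 hg)

lemma mul_coeff_vge {x y : HahnSeries Γ L} {d e : Γ} (hx : vge x d) (hy : vge y e) :
    (x * y).coeff (d + e) = x.coeff d * y.coeff e := by
  rw [HahnSeries.coeff_mul]
  by_cases hxd : x.coeff d = 0
  · rw [hxd, zero_mul]
    refine Finset.sum_eq_zero fun ij hij => ?_
    rw [Finset.mem_addAntidiagonal] at hij
    obtain ⟨h1, h2, h3⟩ := hij
    rcases lt_trichotomy ij.1 d with hlt | heq | hgt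
    · rw [hx _ hlt, zero_mul]
    · exact absurd (heq ▸ h1) (by simpa [HahnSeries.mem_support] using hxd)
    · have : ij.2 < e := by
        by_contra hc
        exact absurd (h3 ▸ add_lt_add_of_lt_of_le hgt (not_lt.1 hc)) (lt_irrefl _)
      rw [hy _ this, mul_zero]
  by_cases hye : y.coeff e = 0
  · rw [hye, mul_zero]
    refine Finset.sum_eq_zero fun ij hij => ?_
    rw [Finset.mem_addAntidiagonal] at hij
    obtain ⟨h1, h2, h3⟩ := hij
    rcases lt_trichotomy ij.2 e with hlt | heq | hgt
    · rw [hy _ hlt, mul_zero]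
    · exact absurd (heq ▸ h2) (by simpa [HahnSeries.mem_support] using hye)
    · have : ij.1 < d := by
        by_contra hc
        exact absurd (h3 ▸ add_lt_add_of_le_of_lt (not_lt.1 hc) hgt) (lt_irrefl _)
      rw [hx _ this, zero_mul]
  · rw [Finset.sum_eq_single (d, e)]
    · intro ij hij hne
      rw [Finset.mem_addAntidiagonal] at hij
      obtain ⟨h1, h2, h3⟩ := hij
      rcases lt_trichotomy ij.1 d with hlt | heq | hgt
      · rw [hx _ hlt, zero_mul]
      · have : ij.2 = e := by
          have := h3; rw [heq] at this; exact add_left_cancel this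
        exact absurd (Prod.ext heq this) hne
      · have : ij.2 < e := by
          by_contra hc
          exact absurd (h3 ▸ add_lt_add_of_lt_of_le hgt (not_lt.1 hc)) (lt_irrefl _)
        rw [hy _ this, mul_zero]
    · intro hne
      exfalso
      exact hne (Finset.mem_addAntidiagonal.2 ⟨hxd, hye, rfl⟩)

lemma vge_pow {x : HahnSeries Γ L} {d : Γ} (hx : vge x d) (i : ℕ) : vge (x ^ i) (i • d) := by
  induction i with
  | zero =>
      intro g hg
      rw [zero_smul] at hg
      rw [pow_zero]
      refine HahnSeries.coeff_eq_zero_of_lt_orderTop ?_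
      rw [HahnSeries.orderTop_one]
      exact_mod_cast hg
  | succ k ih =>
      rw [pow_succ, succ_nsmul]
      exact vge_mul ih hx

lemma pow_coeff_vge {x : HahnSeries Γ L} {d : Γ} (hx : vge x d) (i : ℕ) :
    (x ^ i).coeff (i • d) = (x.coeff d) ^ i := by
  induction i with
  | zero => simp [HahnSeries.coeff_one]
  | succ k ih =>
      rw [pow_succ, succ_nsmul, mul_coeff_vge (vge_pow hx k) hx, ih, pow_succ]

lemma natCast_mul_coeff (k : ℕ) (x : HahnSeries Γ L) (g : Γ) :
    ((k : HahnSeries Γ L) * x).coeff g = (k : L) * x.coeff g := by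
  rw [← map_natCast (HahnSeries.C : L →+* HahnSeries Γ L) k]
  exact HahnSeries.coeff_single_zero_mul

lemma vge_natCast_mul {x : HahnSeries Γ L} {d : Γ} (k : ℕ) (hx : vge x d) :
    vge ((k : HahnSeries Γ L) * x) d := by
  intro g hg; rw [natCast_mul_coeff, hx g hg, mul_zero]

end HSRC

namespace HSRC

variable {Γ L : Type*} [AddCommGroup Γ] [LinearOrder Γ] [IsOrderedAddMonoid Γ] [Field L]

open scoped Classical

section Newton

variable (hdiv : ∀ (g : Γ) (n : ℕ), 0 < n → ∃ g' : Γ, n • g' = g)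
variable (p : Polynomial (HahnSeries Γ L))

/-- Division in the divisible group. -/
noncomputable def divg (g : Γ) (i : ℕ) : Γ :=
  if hi : 0 < i then (hdiv g i hi).choose else 0

lemma divg_spec {g : Γ} {i : ℕ} (hi : 0 < i) : i • divg hdiv g i = g := by
  rw [divg, dif_pos hi]
  exact (hdiv g i hi).choose_spec

/-- Candidate Newton slopes. -/
noncomputable def slopes (t : HahnSeries Γ L) (i : ℕ) : Γ :=
  divg hdiv ((p.eval t).order - ((taylor t p).coeff i).order) i

/-- Indices of nonzero taylor coefficients in degrees `1..n`. -/
noncomputable def SS (t : HahnSeries Γ L) : Finset ℕ :=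
  (Finset.range (p.natDegree + 1)).filter (fun i => 1 ≤ i ∧ (taylor t p).coeff i ≠ 0)

lemma taylor_ne_zero {t : HahnSeries Γ L} (hp : p ≠ 0) : taylor t p ≠ 0 := by
  intro h
  have := congrArg (taylor (-t)) h
  rw [taylor_taylor, neg_add_cancel, taylor_zero', map_zero] at this
  exact hp this

lemma natDegree_mem_SS {t : HahnSeries Γ L} (hp : p ≠ 0) (hdeg : 0 < p.natDegree) :
    p.natDegree ∈ SS p t := by
  rw [SS, Finset.mem_filter, Finset.mem_range]
  refine ⟨Nat.lt_succ_self _, hdeg, ?_⟩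
  have h1 : (taylor t p).natDegree = p.natDegree := natDegree_taylor p t
  have h2 : (taylor t p).coeff p.natDegree = (taylor t p).leadingCoeff := by
    rw [Polynomial.leadingCoeff, h1]
  rw [h2]
  exact leadingCoeff_ne_zero.2 (taylor_ne_zero p hp)

lemma SS_nonempty {t : HahnSeries Γ L} (hp : p ≠ 0) (hdeg : 0 < p.natDegree) :
    (SS p t).Nonempty := ⟨_, natDegree_mem_SS p hp hdeg⟩

/-- The Newton slope at `t`. -/
noncomputable def gam (t : HahnSeries Γ L) : Γ :=
  if h : (SS p t).Nonempty then (SS p t).sup' h (slopes hdiv p t) else 0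

/-- The residue polynomial at `t`. -/
noncomputable def res (t : HahnSeries Γ L) : L[X] :=
  ∑ i ∈ Finset.range (p.natDegree + 1),
    C (((taylor t p).coeff i).coeff ((p.eval t).order - i • gam hdiv p t)) * X ^ i

variable {p}
variable (hp : p ≠ 0) (hdeg : 0 < p.natDegree)

lemma vge_taylor_coeff (t : HahnSeries Γ L) (i : ℕ) :
    vge ((taylor t p).coeff i) ((p.eval t).order - i • gam hdiv p t) := by
  rcases Nat.eq_zero_or_pos i with h0 | hpos
  · subst h0
    rw [zero_smul, sub_zero, taylor_coeff_zero]
    exact vge_order _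
  by_cases hne : (taylor t p).coeff i = 0
  · rw [hne]; exact vge_zero _
  by_cases hile : i ≤ p.natDegree
  · have hiS : i ∈ SS p t := by
      rw [SS, Finset.mem_filter, Finset.mem_range]
      exact ⟨Nat.lt_succ_of_le hile, hpos, hne⟩
    have hsup : slopes hdiv p t i ≤ gam hdiv p t := by
      rw [gam, dif_pos ⟨i, hiS⟩]
      exact Finset.le_sup' _ hiS
    have h1 : i • slopes hdiv p t i ≤ i • gam hdiv p t :=
      nsmul_le_nsmul_right hsup i
    rw [slopes, divg_spec hdiv hpos] at h1
    exact vge_of_order_le (sub_le_comm.mp h1)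
  · have hlt : (taylor t p).natDegree < i := by
      rw [natDegree_taylor]; exact not_le.1 hile
    exact absurd (coeff_eq_zero_of_natDegree_lt hlt) hne

lemma res_coeff (t : HahnSeries Γ L) {i : ℕ} (hi : i ≤ p.natDegree) :
    (res hdiv p t).coeff i =
      ((taylor t p).coeff i).coeff ((p.eval t).order - i • gam hdiv p t) := by
  rw [res, finset_sum_coeff]
  rw [Finset.sum_eq_single i]
  · simp
  · intro j hj hne
    simp [coeff_C_mul, coeff_X_pow, hne.symm, Ne.symm hne]
  · intro h
    exact absurd (Finset.mem_range.2 (Nat.lt_succ_of_le hi)) h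

lemma natDegree_res_le (t : HahnSeries Γ L) : (res hdiv p t).natDegree ≤ p.natDegree := by
  refine natDegree_sum_le_of_forall_le _ _ fun i hi => ?_
  refine le_trans (natDegree_C_mul_le _ _) ?_
  rw [natDegree_X_pow]
  exact Nat.lt_succ_iff.1 (Finset.mem_range.1 hi)

lemma res_coeff_zero (t : HahnSeries Γ L) (ht : p.eval t ≠ 0) :
    (res hdiv p t).coeff 0 ≠ 0 := by
  rw [res_coeff hdiv t (Nat.zero_le _)]
  simp only [zero_smul, sub_zero, taylor_coeff_zero]
  exact (mt HahnSeries.coeff_order_eq_zero.1) ht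

include hp hdeg in
lemma res_exists_coeff_ne (t : HahnSeries Γ L) :
    ∃ i, 1 ≤ i ∧ i ≤ p.natDegree ∧ (res hdiv p t).coeff i ≠ 0 := by
  obtain ⟨i, hiS, hieq⟩ := Finset.exists_mem_eq_sup' (SS_nonempty p hp hdeg (t := t))
    (slopes hdiv p t)
  rw [SS, Finset.mem_filter, Finset.mem_range] at hiS
  obtain ⟨hilt, hi1, hne⟩ := hiS
  refine ⟨i, hi1, Nat.lt_succ_iff.1 hilt, ?_⟩
  rw [res_coeff hdiv t (Nat.lt_succ_iff.1 hilt)]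
  have hg : gam hdiv p t = slopes hdiv p t i := by
    rw [gam, dif_pos (SS_nonempty p hp hdeg)]
    rw [hieq]
  rw [hg]
  have : i • slopes hdiv p t i = (p.eval t).order - ((taylor t p).coeff i).order :=
    divg_spec hdiv hi1
  rw [this]
  have : (p.eval t).order - ((p.eval t).order - ((taylor t p).coeff i).order)
      = ((taylor t p).coeff i).order := by abel
  rw [this]
  exact (mt HahnSeries.coeff_order_eq_zero.1) hne

include hp hdeg in
lemma res_degree_ne (t : HahnSeries Γ L) : (res hdiv p t).degree ≠ 0 := by
  obtain ⟨i, hi1, _, hne⟩ := res_exists_coeff_ne hdiv hp hdeg t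
  intro h
  have := le_degree_of_ne_zero hne
  rw [h] at this
  exact absurd this (by simp; omega)

end Newton

end HSRC

namespace HSRC

variable {Γ L : Type*} [AddCommGroup Γ] [LinearOrder Γ] [IsOrderedAddMonoid Γ] [Field L]

section Step

variable (hdiv : ∀ (g : Γ) (n : ℕ), 0 < n → ∃ g' : Γ, n • g' = g)
variable {p : Polynomial (HahnSeries Γ L)}

lemma eval_add_expand (t s : HahnSeries Γ L) :
    p.eval (t + s) = ∑ i ∈ Finset.range (p.natDegree + 1),
      (taylor t p).coeff i * s ^ i := by
  have h1 : p.eval (t + s) = (taylor t p).eval s := by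
    rw [taylor_apply, eval_comp, eval_add, eval_X, eval_C, add_comm]
  rw [h1, eval_eq_sum_range' (lt_of_le_of_lt (le_of_eq (natDegree_taylor p t))
    (Nat.lt_succ_self _))]

variable {t s : HahnSeries Γ L}
variable (hs : vge s (gam hdiv p t))
variable (hroot : (res hdiv p t).eval (s.coeff (gam hdiv p t)) = 0)

include hs in
lemma step_vge : vge (p.eval (t + s)) ((p.eval t).order) := by
  rw [eval_add_expand]
  refine vge_sum fun i _ => ?_
  have h := vge_mul (vge_taylor_coeff hdiv (p := p) t i) (vge_pow hs i)
  rwa [sub_add_cancel] at h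

include hs hroot in
lemma step_coeff : (p.eval (t + s)).coeff ((p.eval t).order) = 0 := by
  rw [eval_add_expand, coeff_sum]
  have hterm : ∀ i ∈ Finset.range (p.natDegree + 1),
      ((taylor t p).coeff i * s ^ i).coeff ((p.eval t).order) =
        (res hdiv p t).coeff i * (s.coeff (gam hdiv p t)) ^ i := by
    intro i hi
    have heq : (p.eval t).order =
        ((p.eval t).order - i • gam hdiv p t) + i • gam hdiv p t := by abel
    rw [heq, mul_coeff_vge (vge_taylor_coeff hdiv t i) (vge_pow hs i),
      pow_coeff_vge hs i, res_coeff hdiv t (Nat.lt_succ_iff.1 (Finset.mem_range.1 hi))]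
  rw [Finset.sum_congr rfl hterm,
    ← eval_eq_sum_range' (Nat.lt_succ_of_le (natDegree_res_le hdiv t)), hroot]

include hs hroot in
lemma step_order (ht' : p.eval (t + s) ≠ 0) :
    (p.eval t).order < (p.eval (t + s)).order := by
  by_contra hle
  have hle' : (p.eval (t + s)).order ≤ (p.eval t).order := not_lt.1 hle
  rcases eq_or_lt_of_le hle' with heq | hlt
  · exact (mt HahnSeries.coeff_order_eq_zero.1) ht' (heq ▸ step_coeff hdiv hs hroot)
  · exact (mt HahnSeries.coeff_order_eq_zero.1) ht' (step_vge hdiv hs _ hlt)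

variable (hp : p ≠ 0) (hdeg : 0 < p.natDegree) (ht : p.eval t ≠ 0)

include hs hroot ht in
lemma step_gam (ht' : p.eval (t + s) ≠ 0) :
    gam hdiv p t < gam hdiv p (t + s) := by
  classical
  set γ := gam hdiv p t with hγ
  set b := s.coeff γ with hb
  set d₀ := (p.eval t).order with hd₀
  set n := p.natDegree with hn
  have hres0 : res hdiv p t ≠ 0 := fun h => res_coeff_zero hdiv t ht (by rw [h]; simp)
  set m := rootMultiplicity b (res hdiv p t) with hm
  have hm1 : 0 < m := (rootMultiplicity_pos hres0).2 hroot
  have hmn : m ≤ n := by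
    refine le_trans ?_ (natDegree_res_le hdiv t)
    have hdvd := pow_rootMultiplicity_dvd (res hdiv p t) b
    have h2 := natDegree_le_of_dvd hdvd hres0
    rwa [natDegree_pow, natDegree_X_sub_C, mul_one] at h2
  -- the m-th taylor coefficient at t+s
  have hTT : taylor (t + s) p = taylor s (taylor t p) := by
    rw [taylor_taylor, add_comm]
  have hc'm : (taylor (t + s) p).coeff m =
      ∑ j ∈ Finset.range (n - m + 1),
        (((j + m).choose m : HahnSeries Γ L) * (taylor t p).coeff (j + m)) * s ^ j := by
    rw [hTT, taylor_coeff, eval_eq_sum_range'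
      (lt_of_le_of_lt (le_trans (natDegree_hasseDeriv_le _ _)
        (by rw [natDegree_taylor])) (Nat.lt_succ_self (n - m)))]
    exact Finset.sum_congr rfl fun j _ => by rw [hasseDeriv_coeff]
  have hjm : ∀ j ∈ Finset.range (n - m + 1), j + m ≤ n := fun j hj => by
    have := Nat.lt_succ_iff.1 (Finset.mem_range.1 hj)
    omega
  -- vge of the m-th coefficient
  have hvge : vge ((taylor (t + s) p).coeff m) (d₀ - m • γ) := by
    rw [hc'm]
    refine vge_sum fun j hj => ?_
    have h1 := vge_mul (vge_natCast_mul ((j + m).choose m)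
      (vge_taylor_coeff hdiv (p := p) t (j + m))) (vge_pow hs j)
    have heq : d₀ - (j + m) • γ + j • γ = d₀ - m • γ := by
      rw [add_nsmul]; abel
    rwa [heq] at h1
  -- its coefficient at d₀ - m•γ
  have hcoeff : ((taylor (t + s) p).coeff m).coeff (d₀ - m • γ) =
      (hasseDeriv m (res hdiv p t)).eval b := by
    rw [hc'm, coeff_sum]
    have hterm : ∀ j ∈ Finset.range (n - m + 1),
        ((((j + m).choose m : HahnSeries Γ L) * (taylor t p).coeff (j + m)) * s ^ j).coeff
          (d₀ - m • γ) =
          (((j + m).choose m : L) * (res hdiv p t).coeff (j + m)) * b ^ j := by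
      intro j hj
      have heq : d₀ - m • γ = (d₀ - (j + m) • γ) + j • γ := by
        rw [add_nsmul]; abel
      rw [mul_assoc, heq, natCast_mul_coeff,
        mul_coeff_vge (vge_taylor_coeff hdiv (p := p) t (j + m)) (vge_pow hs j),
        pow_coeff_vge hs j, res_coeff hdiv t (hjm j hj), ← hb, mul_assoc]
    rw [Finset.sum_congr rfl hterm, eval_eq_sum_range'
      (lt_of_le_of_lt (le_trans (natDegree_hasseDeriv_le _ _)
        (Nat.sub_le_sub_right (natDegree_res_le hdiv t) m)) (Nat.lt_succ_self (n - m)))]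
    exact Finset.sum_congr rfl fun j _ => by rw [hasseDeriv_coeff, mul_assoc]
  -- nonvanishing of that coefficient
  have hne : (hasseDeriv m (res hdiv p t)).eval b ≠ 0 := by
    have hfac := pow_mul_divByMonic_rootMultiplicity_eq (res hdiv p t) b
    set w := res hdiv p t /ₘ (X - C b) ^ m with hw
    have htb : taylor b (res hdiv p t) = X ^ m * taylor b w := by
      conv_lhs => rw [← hfac]
      rw [taylor_mul]
      congr 1
      rw [taylor_apply, pow_comp, sub_comp, X_comp, C_comp, add_sub_cancel_right]
    have h1 : (taylor b (res hdiv p t)).coeff m = w.eval b := by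
      rw [htb]
      have := coeff_X_pow_mul (taylor b w) m 0
      rw [zero_add] at this
      rw [this, taylor_coeff_zero]
    rw [← taylor_coeff, h1]
    exact eval_divByMonic_pow_rootMultiplicity_ne_zero b hres0
  rw [← hcoeff] at hne
  -- conclude
  have horder : ((taylor (t + s) p).coeff m).order = d₀ - m • γ := order_eq_of_vge hvge hne
  have hcne : (taylor (t + s) p).coeff m ≠ 0 := fun h => hne (by rw [h]; simp)
  have hmS : m ∈ SS p (t + s) := by
    rw [SS, Finset.mem_filter, Finset.mem_range]
    exact ⟨Nat.lt_succ_of_le hmn, hm1, hcne⟩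
  have hd₀' : d₀ < (p.eval (t + s)).order := step_order hdiv hs hroot ht'
  have hslope : m • slopes hdiv p (t + s) m =
      (p.eval (t + s)).order - (d₀ - m • γ) := by
    rw [slopes, divg_spec hdiv hm1, horder]
  have hlt : m • γ < m • slopes hdiv p (t + s) m := by
    rw [hslope]
    have : (0 : Γ) < (p.eval (t + s)).order - d₀ := sub_pos.2 hd₀'
    have heq : (p.eval (t + s)).order - (d₀ - m • γ) =
        ((p.eval (t + s)).order - d₀) + m • γ := by abel
    rw [heq]
    exact lt_add_of_pos_left _ this
  have hγlt : γ < slopes hdiv p (t + s) m := (smul_lt_smul_iff_of_pos_left hm1).1 hlt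
  have : slopes hdiv p (t + s) m ≤ gam hdiv p (t + s) := by
    rw [gam, dif_pos ⟨m, hmS⟩]
    exact Finset.le_sup' _ hmS
  exact lt_of_lt_of_le hγlt this

end Step

end HSRC

namespace HSRC

variable {Γ L : Type*} [AddCommGroup Γ] [LinearOrder Γ] [IsOrderedAddMonoid Γ] [Field L]

section Zorn

variable (hdiv : ∀ (g : Γ) (n : ℕ), 0 < n → ∃ g' : Γ, n • g' = g)
variable (p : Polynomial (HahnSeries Γ L))

/-- The refinement relation on approximate roots. -/
def rel (t u : HahnSeries Γ L) : Prop :=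
  t = u ∨ ((u - t) ≠ 0 ∧ (u - t).order = gam hdiv p t ∧
    (res hdiv p t).IsRoot ((u - t).coeff (gam hdiv p t)) ∧
    gam hdiv p t < gam hdiv p u ∧ (p.eval t).order < (p.eval u).order)

variable {hdiv p}

lemma rel_refl (t : HahnSeries Γ L) : rel hdiv p t t := Or.inl rfl

lemma rel_coeff_lt {t u : HahnSeries Γ L} {g : Γ} (h : rel hdiv p t u)
    (hg : g < gam hdiv p t) : u.coeff g = t.coeff g := by
  rcases h with rfl | ⟨hne, ho, _⟩
  · rfl
  · have h0 : (u - t).coeff g = 0 := vge_order (u - t) g (by rw [ho]; exact hg)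
    rw [HahnSeries.coeff_sub, sub_eq_zero] at h0
    exact h0

lemma rel_trans {a b c : HahnSeries Γ L} (hab : rel hdiv p a b) (hbc : rel hdiv p b c) :
    rel hdiv p a c := by
  rcases hab with rfl | ⟨hne1, ho1, hr1, hg1, hd1⟩
  · exact hbc
  rcases hbc with rfl | ⟨hne2, ho2, hr2, hg2, hd2⟩
  · exact Or.inr ⟨hne1, ho1, hr1, hg1, hd1⟩
  refine Or.inr ?_
  have hkey : ∀ g, g ≤ gam hdiv p a → (c - a).coeff g = (b - a).coeff g := by
    intro g hg
    have hcb : (c - b).coeff g = 0 :=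
      vge_order (c - b) g (by rw [ho2]; exact lt_of_le_of_lt hg hg1)
    have : (c - a).coeff g = (c - b).coeff g + (b - a).coeff g := by
      rw [HahnSeries.coeff_sub, HahnSeries.coeff_sub, HahnSeries.coeff_sub]; ring
    rw [this, hcb, zero_add]
  have hca : (c - a).coeff (gam hdiv p a) = (b - a).coeff (gam hdiv p a) := hkey _ le_rfl
  have hvge : vge (c - a) (gam hdiv p a) := by
    intro g hg
    rw [hkey g (le_of_lt hg)]
    exact vge_order (b - a) g (by rw [ho1]; exact hg)
  have hcoeffne : (c - a).coeff (gam hdiv p a) ≠ 0 := by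
    rw [hca, ← ho1]
    exact (mt HahnSeries.coeff_order_eq_zero.1) hne1
  refine ⟨HahnSeries.ne_zero_of_coeff_ne_zero hcoeffne, order_eq_of_vge hvge hcoeffne, ?_,
    lt_trans hg1 hg2, lt_trans hd1 hd2⟩
  rw [Polynomial.IsRoot, hca]
  exact hr1

end Zorn

end HSRC

namespace HSRC

variable {Γ L : Type*} [AddCommGroup Γ] [LinearOrder Γ] [IsOrderedAddMonoid Γ] [Field L]

section ZornMain

open scoped Classical

variable {hdiv : ∀ (g : Γ) (n : ℕ), 0 < n → ∃ g' : Γ, n • g' = g}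
variable {p : Polynomial (HahnSeries Γ L)}

lemma chain_bdd (hnr : ∀ x, p.eval x ≠ 0)
    (c : Set (HahnSeries Γ L)) (hc : IsChain (rel hdiv p) c) :
    ∃ ub, ∀ a ∈ c, rel hdiv p a ub := by
  rcases Set.eq_empty_or_nonempty c with rfl | hne
  · exact ⟨0, fun a ha => absurd ha (Set.notMem_empty a)⟩
  by_cases hmax : ∃ m ∈ c, ∀ t ∈ c, rel hdiv p t m
  · obtain ⟨m, hm, hmub⟩ := hmax
    exact ⟨m, hmub⟩
  push_neg at hmax
  -- every element of the chain has a strict successor in the chain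
  have hsucc : ∀ t ∈ c, ∃ u ∈ c, u ≠ t ∧ rel hdiv p t u := by
    intro t ht
    obtain ⟨u, hu, hnrel⟩ := hmax t ht
    have hut : u ≠ t := fun h => hnrel (h ▸ rel_refl u)
    rcases hc ht hu (Ne.symm hut) with h | h
    · exact ⟨u, hu, hut, h⟩
    · exact absurd h hnrel
  -- coefficients agree below the slopes
  have hagree : ∀ t ∈ c, ∀ u ∈ c, ∀ g : Γ, g < gam hdiv p t → g < gam hdiv p u →
      t.coeff g = u.coeff g := by
    intro t ht u hu g hgt hgu
    rcases eq_or_ne t u with rfl | hne'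
    · rfl
    rcases hc ht hu hne' with h | h
    · exact (rel_coeff_lt h hgt).symm
    · exact rel_coeff_lt h hgu
  -- the pseudo-limit coefficient function
  set f : Γ → L := fun g => if h : ∃ t, t ∈ c ∧ g < gam hdiv p t then h.choose.coeff g else 0
    with hf
  have hfspec : ∀ (g : Γ) (t : HahnSeries Γ L), t ∈ c → g < gam hdiv p t →
      f g = t.coeff g := by
    intro g t ht hgt
    have hex : ∃ t, t ∈ c ∧ g < gam hdiv p t := ⟨t, ht, hgt⟩
    rw [hf]
    simp only [dif_pos hex]
    exact hagree _ hex.choose_spec.1 t ht _ hex.choose_spec.2 hgt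
  -- support is well-founded
  have hsupp : (Function.support f).IsPWO := by
    refine Set.IsWF.isPWO ?_
    rw [Set.isWF_iff_no_descending_seq]
    intro seq hseq hmem
    have h0 : f (seq 0) ≠ 0 := hmem 0
    have hex : ∃ t, t ∈ c ∧ seq 0 < gam hdiv p t := by
      by_contra hcon
      exact h0 (by rw [hf]; exact dif_neg hcon)
    obtain ⟨t₀, ht₀, hgt₀⟩ := hex
    have hsub : ∀ n, seq n ∈ t₀.support := by
      intro n
      have hlt : seq n < gam hdiv p t₀ :=
        lt_of_le_of_lt (hseq.antitone (Nat.zero_le n)) hgt₀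
      have heqc := hfspec (seq n) t₀ ht₀ hlt
      have hm : f (seq n) ≠ 0 := hmem n
      rw [HahnSeries.mem_support]
      rwa [heqc] at hm
    have := t₀.isWF_support
    rw [Set.isWF_iff_no_descending_seq] at this
    exact this seq hseq hsub
  set ub : HahnSeries Γ L := ⟨f, hsupp⟩ with hub
  have hubcoeff : ∀ g, ub.coeff g = f g := fun g => rfl
  refine ⟨ub, fun t ht => ?_⟩
  obtain ⟨u, hu, hut, hrel⟩ := hsucc t ht
  have hstrict := hrel.resolve_left (fun h => hut h.symm)
  obtain ⟨hne1, ho1, hr1, hg1, hd1⟩ := hstrict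
  -- ub - t has the right shape
  have hvge : vge (ub - t) (gam hdiv p t) := by
    intro g hg
    rw [HahnSeries.coeff_sub, hubcoeff, hfspec g t ht hg, sub_self]
  have hcoeq : (ub - t).coeff (gam hdiv p t) = (u - t).coeff (gam hdiv p t) := by
    rw [HahnSeries.coeff_sub, hubcoeff, hfspec _ u hu hg1, HahnSeries.coeff_sub]
  have hcne : (ub - t).coeff (gam hdiv p t) ≠ 0 := by
    rw [hcoeq, ← ho1]
    exact (mt HahnSeries.coeff_order_eq_zero.1) hne1
  have hts : t + (ub - t) = ub := by abel
  have hroot : (res hdiv p t).eval ((ub - t).coeff (gam hdiv p t)) = 0 := by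
    rw [hcoeq]; exact hr1
  refine Or.inr ⟨HahnSeries.ne_zero_of_coeff_ne_zero hcne, order_eq_of_vge hvge hcne,
    hroot, ?_, ?_⟩
  · have := step_gam hdiv (t := t) (s := ub - t) hvge hroot (hnr t) (by rw [hts]; exact hnr ub)
    rwa [hts] at this
  · have := step_order hdiv (t := t) (s := ub - t) hvge hroot (by rw [hts]; exact hnr ub)
    rwa [hts] at this

variable [IsAlgClosed L]

lemma no_root_false
    (hdiv : ∀ (g : Γ) (n : ℕ), 0 < n → ∃ g' : Γ, n • g' = g)
    (hp : p ≠ 0) (hdeg : 0 < p.natDegree) (hnr : ∀ x, p.eval x ≠ 0) : False := by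
  obtain ⟨M, hM⟩ := exists_maximal_of_chains_bounded (chain_bdd hnr) (fun {a b c} => rel_trans)
  -- Newton step at the maximal element
  obtain ⟨b, hb⟩ := IsAlgClosed.exists_root (res hdiv p M) (res_degree_ne hdiv hp hdeg M)
  have hb0 : b ≠ 0 := by
    intro h
    subst h
    have := res_coeff_zero hdiv M (hnr M)
    rw [coeff_zero_eq_eval_zero] at this
    exact this hb
  set s : HahnSeries Γ L := HahnSeries.single (gam hdiv p M) b with hs
  have hsne : s ≠ 0 := HahnSeries.single_ne_zero hb0
  have hscoeff : s.coeff (gam hdiv p M) = b := by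
    rw [hs, HahnSeries.coeff_single, if_pos rfl]
  have hsvge : vge s (gam hdiv p M) := by
    intro g hg
    rw [hs, HahnSeries.coeff_single, if_neg (ne_of_lt hg)]
  have hsub : (M + s) - M = s := by abel
  have hroot : (res hdiv p M).eval (s.coeff (gam hdiv p M)) = 0 := by
    rw [hscoeff]; exact hb
  have hrel : rel hdiv p M (M + s) := by
    refine Or.inr ⟨by rw [hsub]; exact hsne, by rw [hsub]; exact HahnSeries.order_single hb0,
      by rw [hsub, Polynomial.IsRoot]; exact hroot, ?_, ?_⟩
    · exact step_gam hdiv hsvge hroot (hnr M) (hnr (M + s))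
    · exact step_order hdiv hsvge hroot (hnr (M + s))
  have hback := hM (M + s) hrel
  rcases hback with heq | ⟨_, _, _, _, hd⟩
  · exact hsne (add_eq_left.mp heq)
  · have hd1 := hrel.resolve_left (fun h => hsne (add_eq_left.mp h.symm))
    exact lt_asymm hd1.2.2.2.2 hd

/-- Hahn series over an algebraically closed field with divisible value group
are algebraically closed. -/
theorem hahnSeries_isAlgClosed
    (hdiv : ∀ (g : Γ) (n : ℕ), 0 < n → ∃ g' : Γ, n • g' = g) :
    IsAlgClosed (HahnSeries Γ L) := by
  apply IsAlgClosed.of_exists_root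
  intro q hmonic hirr
  by_contra h
  push_neg at h
  have hdeg : 0 < q.natDegree := by
    rcases Nat.eq_zero_or_pos q.natDegree with h0 | h1
    · exact absurd (hmonic.natDegree_eq_zero.1 h0 ▸ isUnit_one) hirr.not_isUnit
    · exact h1
  exact no_root_false hdiv hmonic.ne_zero hdeg (fun x => h x)

end ZornMain

end HSRC

namespace HSRC

section NegOne

variable {Γ K : Type*} [AddCommGroup Γ] [LinearOrder Γ] [IsOrderedAddMonoid Γ] [Field K]

lemma neg_one_not_sq (hK1 : ¬∃ y : K, y ^ 2 = -1) :
    ¬∃ y : HahnSeries Γ K, y ^ 2 = -1 := by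
  rintro ⟨y, hy⟩
  have hyne : y ≠ 0 := by
    intro h
    rw [h] at hy
    simp only [ne_eq, zero_pow, OfNat.ofNat_ne_zero, not_false_eq_true] at hy
    exact one_ne_zero (neg_eq_zero.1 hy.symm)
  have hlc : y.coeff y.order ≠ 0 := (mt HahnSeries.coeff_order_eq_zero.1) hyne
  have hco : (y ^ 2).coeff (2 • y.order) = (y.coeff y.order) ^ 2 :=
    pow_coeff_vge (vge_order y) 2
  rw [hy] at hco
  have hzero : (2 : ℕ) • y.order = 0 := by
    by_contra h
    have hc0 : (-1 : HahnSeries Γ K).coeff (2 • y.order) = 0 := by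
      rw [HahnSeries.coeff_neg, HahnSeries.coeff_one, if_neg h, neg_zero]
    rw [hc0] at hco
    exact pow_ne_zero 2 hlc hco.symm
  rw [hzero] at hco
  rw [HahnSeries.coeff_neg, HahnSeries.coeff_one, if_pos rfl] at hco
  exact hK1 ⟨y.coeff y.order, hco.symm⟩

end NegOne

section Transfer

open Polynomial

variable {Γ K : Type*} [AddCommGroup Γ] [LinearOrder Γ] [IsOrderedAddMonoid Γ] [Field K]

/-- Coefficientwise ring hom on Hahn series. -/
def mapRingHom {L' : Type*} [Field L'] (f : K →+* L') :
    HahnSeries Γ K →+* HahnSeries Γ L' where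
  toFun x := x.map f
  map_one' := HahnSeries.map_one f.toMonoidWithZeroHom
  map_mul' x y := HahnSeries.map_mul f.toNonUnitalRingHom (x := x) (y := y)
  map_zero' := by ext g; simp [HahnSeries.map_coeff]
  map_add' x y := HahnSeries.map_add f.toAddMonoidHom (x := x) (y := y)

lemma mapRingHom_coeff {L' : Type*} [Field L'] (f : K →+* L') (x : HahnSeries Γ K) (g : Γ) :
    (mapRingHom f x).coeff g = f (x.coeff g) := rfl

lemma root_sq : (AdjoinRoot.root (X ^ 2 + 1 : K[X])) ^ 2 = -1 := by
  have h := AdjoinRoot.mk_self (f := (X ^ 2 + 1 : K[X]))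
  rw [map_add, map_pow, AdjoinRoot.mk_X, map_one] at h
  linear_combination h

lemma X_sq_ne_zero : (X ^ 2 + 1 : K[X]) ≠ 0 := by
  intro h
  have := congrArg (fun q => Polynomial.coeff q 0) h
  simp at this

lemma pb_dim : (AdjoinRoot.powerBasis (X_sq_ne_zero (K := K))).dim = 2 := by
  rw [AdjoinRoot.powerBasis_dim]
  compute_degree!

/-- Basis `1, i` of `K[i]`. -/
noncomputable def Bbasis : Module.Basis (Fin 2) K (AdjoinRoot (X ^ 2 + 1 : K[X])) :=
  (AdjoinRoot.powerBasis (X_sq_ne_zero (K := K))).basis.reindex (finCongr pb_dim)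

lemma Bbasis_zero : Bbasis (K := K) 0 = 1 := by
  rw [Bbasis, Module.Basis.reindex_apply, PowerBasis.basis_eq_pow]
  have : (((finCongr (pb_dim (K := K))).symm 0 : Fin _) : ℕ) = 0 := rfl
  rw [this, pow_zero]

lemma Bbasis_one : Bbasis (K := K) 1 = AdjoinRoot.root _ := by
  rw [Bbasis, Module.Basis.reindex_apply, PowerBasis.basis_eq_pow]
  have : (((finCongr (pb_dim (K := K))).symm 1 : Fin _) : ℕ) = 1 := rfl
  rw [this, pow_one, AdjoinRoot.powerBasis_gen]

lemma reIm_spec (l : AdjoinRoot (X ^ 2 + 1 : K[X])) :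
    AdjoinRoot.of _ (Bbasis.repr l 0) + AdjoinRoot.of _ (Bbasis.repr l 1) * AdjoinRoot.root _
      = l := by
  have hsum := (Bbasis (K := K)).sum_repr l
  rw [Fin.sum_univ_two, Bbasis_zero, Bbasis_one, Algebra.smul_def, Algebra.smul_def,
    mul_one, AdjoinRoot.algebraMap_eq] at hsum
  exact hsum

variable [Fact (Irreducible (X ^ 2 + 1 : K[X]))]
variable [Fact (Irreducible (X ^ 2 + 1 : Polynomial (HahnSeries Γ K)))]

/-- The lift of `HahnSeries Γ K` with `i` adjoined into `HahnSeries Γ K[i]`. -/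
noncomputable def Psi :
    AdjoinRoot (X ^ 2 + 1 : Polynomial (HahnSeries Γ K)) →+*
      HahnSeries Γ (AdjoinRoot (X ^ 2 + 1 : K[X])) :=
  AdjoinRoot.lift (mapRingHom (AdjoinRoot.of _)) (HahnSeries.C (AdjoinRoot.root _))
    (by
      rw [eval₂_add, eval₂_pow, eval₂_X, eval₂_one, ← map_pow, root_sq, map_neg, map_one]
      ring)

lemma Psi_bijective : Function.Bijective (Psi (Γ := Γ) (K := K)) := by
  constructor
  · exact RingHom.injective _
  · intro y
    classical
    set Re : AdjoinRoot (X ^ 2 + 1 : K[X]) → K := fun l => Bbasis.repr l 0 with hRe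
    set Im : AdjoinRoot (X ^ 2 + 1 : K[X]) → K := fun l => Bbasis.repr l 1 with hIm
    have hRe0 : Re 0 = 0 := by simp [hRe]
    have hIm0 : Im 0 = 0 := by simp [hIm]
    set u : HahnSeries Γ K := ⟨Re ∘ y.coeff, Set.IsPWO.mono y.isPWO_support' (by
      intro g hg
      simp only [Function.mem_support, Function.comp_apply] at hg ⊢
      intro h0
      rw [h0] at hg
      exact hg hRe0)⟩ with hu
    set v : HahnSeries Γ K := ⟨Im ∘ y.coeff, Set.IsPWO.mono y.isPWO_support' (by
      intro g hg
      simp only [Function.mem_support, Function.comp_apply] at hg ⊢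
      intro h0
      rw [h0] at hg
      exact hg hIm0)⟩ with hv
    refine ⟨AdjoinRoot.of _ u + AdjoinRoot.of _ v * AdjoinRoot.root _, ?_⟩
    rw [RingHom.map_add, RingHom.map_mul, Psi, AdjoinRoot.lift_of, AdjoinRoot.lift_of,
      AdjoinRoot.lift_root]
    ext g
    rw [HahnSeries.coeff_add, HahnSeries.C_apply, HahnSeries.coeff_mul_single_zero,
      mapRingHom_coeff, mapRingHom_coeff]
    exact reIm_spec (y.coeff g)

end Transfer

end HSRC

open Polynomial

/-- If `Γ` is a divisible linearly ordered abelian group and `K` a real closed field of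
characteristic 0 (`-1` is not a square in `K` and `K[X]/(X²+1)` is algebraically closed),
then the Hahn series field `HahnSeries Γ K` is real closed: `-1` is not a square in it and
`(HahnSeries Γ K)[X]/(X²+1)` is algebraically closed. -/
theorem hahnSeries_realClosed {Γ K : Type*} [AddCommGroup Γ] [LinearOrder Γ] [IsOrderedAddMonoid Γ]
    [Field K] [CharZero K]
    (hdiv : ∀ (g : Γ) (n : ℕ), 0 < n → ∃ g' : Γ, n • g' = g)
    (hK1 : ¬∃ y : K, y ^ 2 = -1)
    [Fact (Irreducible (X ^ 2 + 1 : K[X]))]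
    (hK2 : IsAlgClosed (AdjoinRoot (X ^ 2 + 1 : K[X]))) :
    (¬∃ y : HahnSeries Γ K, y ^ 2 = -1) ∧
      ∀ hi : Fact (Irreducible (X ^ 2 + 1 : Polynomial (HahnSeries Γ K))),
        letI := hi
        IsAlgClosed (AdjoinRoot (X ^ 2 + 1 : Polynomial (HahnSeries Γ K))) := by
  constructor
  · exact HSRC.neg_one_not_sq hK1
  · intro hi
    haveI := hi
    haveI := hK2
    haveI : IsAlgClosed (HahnSeries Γ (AdjoinRoot (X ^ 2 + 1 : K[X]))) :=
      HSRC.hahnSeries_isAlgClosed hdiv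
    apply IsAlgClosed.of_exists_root
    intro q hq hirr
    obtain ⟨inj, surj⟩ := HSRC.Psi_bijective (Γ := Γ) (K := K)
    have hqdeg : q.degree ≠ 0 := by
      have h0 : 0 < q.natDegree := by
        rcases Nat.eq_zero_or_pos q.natDegree with hz | h1
        · exact absurd (hq.natDegree_eq_zero.1 hz ▸ isUnit_one) hirr.not_isUnit
        · exact h1
      rw [Polynomial.degree_eq_natDegree hq.ne_zero]
      exact_mod_cast (Nat.pos_iff_ne_zero.1 h0 ∘ fun h => by exact_mod_cast h)
    have hdeg : (q.map (HSRC.Psi (Γ := Γ) (K := K))).degree ≠ 0 := by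
      rw [Polynomial.degree_map_eq_of_injective inj]
      exact hqdeg
    obtain ⟨x, hx⟩ := IsAlgClosed.exists_root _ hdeg
    obtain ⟨z, rfl⟩ := surj x
    refine ⟨z, ?_⟩
    have hz : HSRC.Psi (q.eval z) = 0 := by
      rw [← Polynomial.eval₂_hom, ← Polynomial.eval_map]
      exact hx
    have := inj (a₁ := q.eval z) (a₂ := 0) (by rw [hz, RingHom.map_zero])
    exact this
end
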